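/- arXiv:2010.02790 — 5 statements merged into one kernel-verified Lean document; each statement's English description precedes it below -/
import Mathlib

section
/- Let N ≥ 2 be an integer, R_N a real number with R_N < 0, 0 < β < π/(N−1), and let R : S(β,ρ₀) → ℂ be holomorphic with R(z) = z + R_N·z^N + O(|z|^{N+1}) as z → 0. Set λ := β·(N−1)/2. Then for every ν ∈ (0, (N−1)·|R_N|·cos λ) there exists ρ ∈ (0,ρ₀] such that R maps S(β,ρ) into itself and, for every j ∈ ℕ and every z ∈ S(β,ρ), |R^j(z)| ≤ |z| / (1 + j·ν·|z|^{N−1})^{1/(N−1)}, where R^j denotes the j-th iterate of R. -/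
set_option maxHeartbeats 1000000

open Set Filter

lemma pow_polar (z : ℂ) (m : ℕ) :
    z ^ m = (‖z‖ ^ m : ℝ) * (Real.cos (m * z.arg) + Real.sin (m * z.arg) * Complex.I) := by
  conv_lhs => rw [← Complex.norm_mul_exp_arg_mul_I z]
  rw [mul_pow, ← Complex.exp_nat_mul, ← mul_assoc, Complex.exp_mul_I]
  push_cast
  ring_nf

lemma pow_polar_re (z : ℂ) (m : ℕ) : (z ^ m).re = ‖z‖ ^ m * Real.cos ((m:ℝ) * z.arg) := by
  rw [pow_polar z m]
  simp only [Complex.mul_re, Complex.mul_im, Complex.add_re, Complex.add_im,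
    Complex.ofReal_re, Complex.ofReal_im, Complex.I_re, Complex.I_im]
  ring

lemma pow_polar_im (z : ℂ) (m : ℕ) : (z ^ m).im = ‖z‖ ^ m * Real.sin ((m:ℝ) * z.arg) := by
  rw [pow_polar z m]
  simp only [Complex.mul_re, Complex.mul_im, Complex.add_re, Complex.add_im,
    Complex.ofReal_re, Complex.ofReal_im, Complex.I_re, Complex.I_im]
  ring

lemma one_sub_pow_mul_le (s : ℝ) (m : ℕ) (h0 : 0 ≤ s) (h1 : s ≤ 1) :
    (1 - s) ^ m * (1 + m * s) ≤ 1 := by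
  have h2 : (1 - s) ^ m ≤ Real.exp (-((m:ℝ) * s)) := by
    calc (1 - s) ^ m ≤ (Real.exp (-s)) ^ m := by
          apply pow_le_pow_left₀ (by linarith)
          linarith [Real.add_one_le_exp (-s)]
      _ = Real.exp (-((m:ℝ) * s)) := by
          rw [← Real.exp_nat_mul]; ring_nf
  have h3 : 1 + (m:ℝ) * s ≤ Real.exp ((m:ℝ) * s) := by
    linarith [Real.add_one_le_exp ((m:ℝ) * s)]
  calc (1 - s) ^ m * (1 + (m:ℝ) * s) ≤ Real.exp (-((m:ℝ)*s)) * Real.exp ((m:ℝ)*s) := by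
        apply mul_le_mul h2 h3 (by positivity) (Real.exp_nonneg _)
    _ = 1 := by rw [← Real.exp_add]; simp

lemma arg_one_add_small {v : ℂ} (hv : ‖v‖ ≤ 1/2) :
    0 < (1 + v).re ∧ (1 + v) ≠ 0 ∧ |(1 + v).arg| ≤ Real.pi * ‖v‖ := by
  have hvre : |v.re| ≤ ‖v‖ := Complex.abs_re_le_norm v
  have hvim : |v.im| ≤ ‖v‖ := Complex.abs_im_le_norm v
  have him : (1 + v).im = v.im := by simp
  have hre : (1/2 : ℝ) ≤ (1 + v).re := by
    simp only [Complex.add_re, Complex.one_re]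
    have := abs_le.1 hvre
    linarith
  have hre0 : 0 < (1 + v).re := by linarith
  have hne : (1 + v) ≠ 0 := fun h => by simp [h] at hre0
  have hw : (1/2 : ℝ) ≤ ‖1 + v‖ := hre.trans (Complex.re_le_norm _)
  have harg2 : |(1 + v).arg| ≤ Real.pi / 2 :=
    (Complex.abs_arg_lt_pi_div_two_iff.2 (Or.inl hre0)).le
  have habs0 : (0:ℝ) < ‖1 + v‖ := by linarith
  have hsin : Real.sin |(1+v).arg| = |(1+v).im| / ‖1+v‖ := by
    rcases le_or_gt 0 (1+v).arg with h | h
    · have him0 : 0 ≤ (1+v).im := Complex.arg_nonneg_iff.1 h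
      rw [abs_of_nonneg h, Complex.sin_arg, abs_of_nonneg him0]
    · have him0 : (1+v).im < 0 := Complex.arg_neg_iff.1 h
      rw [abs_of_neg h, Real.sin_neg, Complex.sin_arg, abs_of_neg him0]
      ring
  have hmls := Real.mul_le_sin (abs_nonneg (1+v).arg) harg2
  have hdiv : |(1+v).im| / ‖1+v‖ ≤ ‖v‖ / (1/2) := by
    apply div_le_div₀ (norm_nonneg v) _ (by norm_num) hw
    rw [him]; exact hvim
  refine ⟨hre0, hne, ?_⟩
  have hπ := Real.pi_pos
  have key : 2 / Real.pi * |(1+v).arg| ≤ 2 * ‖v‖ := by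
    calc 2 / Real.pi * |(1+v).arg| ≤ Real.sin |(1+v).arg| := hmls
      _ = |(1+v).im| / ‖1+v‖ := hsin
      _ ≤ ‖v‖ / (1/2) := hdiv
      _ = 2 * ‖v‖ := by ring
  nlinarith [mul_le_mul_of_nonneg_left key hπ.le,
    (by field_simp : Real.pi * (2 / Real.pi * |(1+v).arg|) = 2 * |(1+v).arg|)]

/-- `n ≤ r` from `n² ≤ r²`. -/
lemma le_of_sq_le_sq' {n r : ℝ} (hn : 0 ≤ n) (hr : 0 ≤ r) (h : n^2 ≤ r^2) : n ≤ r := by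
  nlinarith

lemma iterate_combine (r s T ν n : ℝ) (hr : 0 ≤ r) (hν : 0 ≤ ν) (hs : 0 ≤ s) (hT : 0 ≤ T)
    (hn : 0 ≤ n) (h1 : r * (1 + ν * s) ≤ s) (h2 : s * (1 + n * ν * T) ≤ T) :
    r * (1 + (n + 1) * ν * T) ≤ T := by
  have hA : 0 ≤ s - r * (1 + ν * s) := by linarith
  have hB : 0 ≤ T - s * (1 + n * ν * T) := by linarith
  have hfac : 0 ≤ 1 + (n + 1) * ν * T := by positivity
  have hνs : 0 ≤ ν * s := mul_nonneg hν hs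
  nlinarith [mul_nonneg hA hfac, hB, hνs, mul_nonneg hνs hr]

/-- The open complex sector of opening `β` and radius `ρ`. -/
def sector (β ρ : ℝ) : Set ℂ :=
  {z : ℂ | z ≠ 0 ∧ |z.arg| < β / 2 ∧ ‖z‖ < ρ}

/-- Lemma 4.1: contraction estimates for the iterates of a holomorphic map
`R(z) = z + R_N z^N + O(|z|^{N+1})`, `R_N < 0`, on a complex sector. -/
theorem stmt_12
    (N : ℕ) (hN : 2 ≤ N) (RN : ℝ) (hRN : RN < 0)
    (β ρ₀ : ℝ) (hβ0 : 0 < β) (hβ : β < Real.pi / ((N:ℝ) - 1)) (hρ₀ : 0 < ρ₀)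
    (R : ℂ → ℂ) (hR : DifferentiableOn ℂ R (sector β ρ₀))
    (hRexp : ∃ C > (0:ℝ), ∃ δ > (0:ℝ), ∀ z ∈ sector β ρ₀, ‖z‖ < δ →
      ‖R z - z - (RN : ℂ) * z ^ N‖ ≤ C * ‖z‖ ^ (N + 1)) :
    ∀ ν : ℝ, 0 < ν → ν < ((N:ℝ) - 1) * |RN| * Real.cos (β * ((N:ℝ) - 1) / 2) →
      ∃ ρ : ℝ, 0 < ρ ∧ ρ ≤ ρ₀ ∧
        MapsTo R (sector β ρ) (sector β ρ) ∧
        ∀ j : ℕ, ∀ z ∈ sector β ρ,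
          ‖R^[j] z‖ ≤ ‖z‖ / (1 + (j:ℝ) * ν * ‖z‖ ^ (N - 1)) ^ ((1:ℝ) / ((N:ℝ) - 1)) := by
  intro ν hν0 hν1
  obtain ⟨C, hC, δ, hδ, hest⟩ := hRexp
  have hπ := Real.pi_pos
  set m : ℕ := N - 1 with hm
  have hm1 : 1 ≤ m := by omega
  have hmR : (m : ℝ) = (N : ℝ) - 1 := by
    have h : N = m + 1 := by omega
    rw [h]; push_cast; ring
  have hm0 : (0:ℝ) < m := by exact_mod_cast hm1
  have hN1 : (1:ℝ) ≤ (N:ℝ) - 1 := by rw [← hmR]; exact_mod_cast hm1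
  have hβπ : β < Real.pi := lt_of_lt_of_le hβ (div_le_self hπ.le hN1)
  set lam : ℝ := β * ((N:ℝ) - 1) / 2 with hlam
  have hlam0 : 0 < lam := by
    rw [hlam]; exact div_pos (mul_pos hβ0 (by linarith)) two_pos
  have hlamlt : lam < Real.pi / 2 := by
    have h := (lt_div_iff₀ (by linarith : (0:ℝ) < (N:ℝ) - 1)).1 hβ
    rw [hlam]; linarith
  have hcos : 0 < Real.cos lam := Real.cos_pos_of_mem_Ioo ⟨by linarith, hlamlt⟩
  set a : ℝ := -RN * Real.cos lam with ha
  have ha0 : 0 < a := mul_pos (by linarith) hcos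
  have hν1' : ν < (m:ℝ) * a := by
    rw [hmR, ha]
    rw [abs_of_neg hRN] at hν1
    linarith [hν1]
  set a' : ℝ := ν / (m:ℝ) with ha'
  have ha'0 : 0 < a' := div_pos hν0 hm0
  have hνa' : ν = (m:ℝ) * a' := by
    rw [ha', mul_comm, div_mul_cancel₀ _ (ne_of_gt hm0)]
  have ha'a : a' < a := by rw [ha', div_lt_iff₀ hm0]; linarith [hν1']
  set s0 : ℝ := Real.sin (lam / 2) with hs0def
  have hs0 : 0 < s0 := Real.sin_pos_of_pos_of_lt_pi (by linarith) (by linarith)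
  set b : ℝ := RN ^ 2 with hb
  have hb0 : (0:ℝ) ≤ b := sq_nonneg RN
  set K : ℝ := -RN + C + b/2 + a + 1 with hK
  have hK0 : 0 < K := by rw [hK]; linarith
  set ε : ℝ := min (1/2) (min (a - a') (min (β / (8 * Real.pi)) (-RN * s0))) with hε
  have hε0 : 0 < ε := by
    apply lt_min (by norm_num)
    apply lt_min (by linarith)
    apply lt_min
    · positivity
    · exact mul_pos (by linarith) hs0
  have hε12 : ε ≤ 1/2 := min_le_left _ _
  have hεa : ε ≤ a - a' := (min_le_right _ _).trans (min_le_left _ _)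
  have hεβ : ε ≤ β / (8 * Real.pi) :=
    (min_le_right _ _).trans ((min_le_right _ _).trans (min_le_left _ _))
  have hεs : ε ≤ -RN * s0 :=
    (min_le_right _ _).trans ((min_le_right _ _).trans (min_le_right _ _))
  set ρ : ℝ := min ρ₀ (min δ (min 1 (ε / K))) with hρdef
  have hρ0 : 0 < ρ := by
    apply lt_min hρ₀
    apply lt_min hδ
    apply lt_min one_pos
    positivity
  have hρρ₀ : ρ ≤ ρ₀ := min_le_left _ _
  have hρδ : ρ ≤ δ := (min_le_right _ _).trans (min_le_left _ _)
  have hρ1 : ρ ≤ 1 := (min_le_right _ _).trans ((min_le_right _ _).trans (min_le_left _ _))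
  have hρεK : ρ ≤ ε / K :=
    (min_le_right _ _).trans ((min_le_right _ _).trans (min_le_right _ _))
  have hρK : K * ρ ≤ ε := by
    rw [mul_comm]; exact (le_div_iff₀ hK0).1 hρεK
  clear_value lam a a' s0 b K ε ρ
  have step : ∀ z ∈ sector β ρ, R z ∈ sector β ρ ∧ ‖R z‖ ^ m * (1 + ν * ‖z‖ ^ m) ≤ ‖z‖ ^ m := by
    rintro z ⟨hz0, hzarg, hzρ⟩
    have hznorm : 0 < ‖z‖ := norm_pos_iff.2 hz0
    set t : ℝ := ‖z‖ ^ m with htdef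
    have ht0 : 0 < t := pow_pos hznorm m
    have htz : t ≤ ‖z‖ :=
      pow_le_of_le_one hznorm.le (le_of_lt (lt_of_lt_of_le hzρ hρ1)) (by omega)
    have htρ : t < ρ := lt_of_le_of_lt htz hzρ
    have hθβ : |z.arg| < β / 2 := hzarg
    have hθ1 := abs_lt.1 hθβ
    have hmθ : |(m:ℝ) * z.arg| < lam := by
      rw [abs_mul, Nat.abs_cast]
      calc (m:ℝ) * |z.arg| < (m:ℝ) * (β/2) := mul_lt_mul_of_pos_left hθβ hm0
        _ = lam := by rw [hlam, ← hmR]; ring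
    have hmθhalf := abs_lt.1 (hmθ.trans hlamlt)
    have hcosθ : Real.cos lam ≤ Real.cos ((m:ℝ) * z.arg) := by
      rw [← Real.cos_abs ((m:ℝ) * z.arg)]
      exact Real.cos_le_cos_of_nonneg_of_le_pi (abs_nonneg _) (by linarith) hmθ.le
    set u : ℂ := (RN:ℂ) * z ^ m with hu
    have hure : u.re = RN * (t * Real.cos ((m:ℝ) * z.arg)) := by
      rw [hu, htdef]
      simp only [Complex.mul_re, Complex.ofReal_re, Complex.ofReal_im, zero_mul, sub_zero]
      rw [pow_polar_re z m]
    have huim : u.im = RN * (t * Real.sin ((m:ℝ) * z.arg)) := by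
      rw [hu, htdef]
      simp only [Complex.mul_im, Complex.ofReal_re, Complex.ofReal_im, zero_mul, add_zero]
      rw [pow_polar_im z m]
    have hunorm : ‖u‖ = -RN * t := by
      rw [hu, norm_mul, norm_pow, Complex.norm_real, Real.norm_eq_abs, abs_of_neg hRN,
        htdef]
    have hNm : N = m + 1 := by omega
    have hzmem : z ∈ sector β ρ₀ := ⟨hz0, hzarg, lt_of_lt_of_le hzρ hρρ₀⟩
    have he := hest z hzmem (lt_of_lt_of_le hzρ hρδ)
    set v : ℂ := R z / z - 1 with hv
    clear_value t u v
    have hRzv : R z = z * (1 + v) := by rw [hv]; field_simp; ring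
    have hvu_eq : v - u = (R z - z - (RN:ℂ) * z ^ N) / z := by
      rw [hv, hu, hNm, pow_succ]; field_simp
    have hvu : ‖v - u‖ ≤ C * (ρ * t) := by
      rw [hvu_eq, norm_div, div_le_iff₀ hznorm]
      have h1 : t * ‖z‖ ≤ ρ * t := by
        rw [mul_comm]; exact mul_le_mul_of_nonneg_right hzρ.le ht0.le
      calc ‖R z - z - (RN:ℂ) * z ^ N‖ ≤ C * ‖z‖ ^ (N + 1) := he
        _ = C * (t * ‖z‖) * ‖z‖ := by rw [hNm, htdef]; ring
        _ ≤ C * (ρ * t) * ‖z‖ :=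
            mul_le_mul_of_nonneg_right (mul_le_mul_of_nonneg_left h1 hC.le) (norm_nonneg z)
    have hvnorm : ‖v‖ ≤ (-RN + C * ρ) * t := by
      calc ‖v‖ = ‖u + (v - u)‖ := by congr 1; ring
        _ ≤ ‖u‖ + ‖v - u‖ := norm_add_le _ _
        _ ≤ -RN * t + C * (ρ * t) := by rw [hunorm]; linarith
        _ = (-RN + C * ρ) * t := by ring
    have hCρ : C * ρ ≤ C := mul_le_of_le_one_right hC.le hρ1
    have hvε : ‖v‖ ≤ ε := by
      calc ‖v‖ ≤ (-RN + C * ρ) * t := hvnorm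
        _ ≤ (-RN + C) * ρ := mul_le_mul (by linarith) htρ.le ht0.le (by linarith)
        _ ≤ K * ρ := by
            apply mul_le_mul_of_nonneg_right _ hρ0.le
            rw [hK]; linarith
        _ ≤ ε := hρK
    have hv12 : ‖v‖ ≤ 1/2 := hvε.trans hε12
    obtain ⟨hwre, hwne, hwarg⟩ := arg_one_add_small hv12
    have hargv8 : |(1 + v).arg| ≤ β / 8 := by
      have h8 : Real.pi * (β / (8 * Real.pi)) = β / 8 := by field_simp
      calc |(1 + v).arg| ≤ Real.pi * ‖v‖ := hwarg
        _ ≤ Real.pi * ε := mul_le_mul_of_nonneg_left hvε hπ.le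
        _ ≤ β / 8 := by rw [← h8]; exact mul_le_mul_of_nonneg_left hεβ hπ.le
    have hargv := abs_le.1 hargv8
    -- norm estimates
    have haK : a ≤ K := by rw [hK]; linarith
    have hat : a * t ≤ 1/2 := by
      have h1 : a * t ≤ a * ρ := mul_le_mul_of_nonneg_left htρ.le ha0.le
      have h2 : a * ρ ≤ K * ρ := mul_le_mul_of_nonneg_right haK hρ0.le
      linarith
    have hRNt : RN * t ≤ 0 := by
      have := mul_le_mul_of_nonneg_right hRN.le ht0.le
      simpa using this
    have hsq : u.re ^ 2 + u.im ^ 2 = b * t ^ 2 := by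
      have h1 : u.re ^ 2 + u.im ^ 2 = ‖u‖ ^ 2 := by
        rw [Complex.sq_norm, Complex.normSq_apply]; ring
      rw [h1, hunorm, hb]; ring
    have hu2 : ‖1 + u‖ ^ 2 = 1 + 2 * u.re + b * t ^ 2 := by
      have e1 : ‖(1:ℂ) + u‖ ^ 2 = (1 + u.re) ^ 2 + u.im ^ 2 := by
        rw [Complex.sq_norm, Complex.normSq_apply]
        simp only [Complex.add_re, Complex.add_im, Complex.one_re, Complex.one_im]
        ring
      rw [e1]; linear_combination hsq
    have hure' : u.re ≤ -(a * t) := by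
      have key := mul_le_mul_of_nonpos_left hcosθ hRNt
      calc u.re = RN * t * Real.cos ((m:ℝ) * z.arg) := by rw [hure]; ring
        _ ≤ RN * t * Real.cos lam := key
        _ = -(a * t) := by rw [ha]; ring
    have hbt2 : (0:ℝ) ≤ (b/2) * t^2 := mul_nonneg (by linarith) (sq_nonneg t)
    have h1u : ‖1 + u‖ ≤ 1 - a * t + (b/2) * t ^ 2 := by
      apply le_of_sq_le_sq' (norm_nonneg _) (by linarith)
      calc ‖1 + u‖ ^ 2 = 1 + 2 * u.re + b * t ^ 2 := hu2
        _ ≤ 1 - 2 * (a*t) + b * t ^ 2 := by linarith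
        _ ≤ (1 - a * t + (b/2) * t ^ 2) ^ 2 := by linarith [sq_nonneg (a*t - (b/2)*t^2)]
    have hbc : (b/2) * t + C * ρ ≤ a - a' := by
      have h1 : (b/2) * t ≤ (b/2) * ρ := mul_le_mul_of_nonneg_left htρ.le (by linarith)
      have h2 : (b/2) * ρ + C * ρ ≤ K * ρ := by
        have : (b/2) + C ≤ K := by rw [hK]; linarith
        calc (b/2) * ρ + C * ρ = ((b/2) + C) * ρ := by ring
          _ ≤ K * ρ := mul_le_mul_of_nonneg_right this hρ0.le
      linarith [h1, h2, hρK, hεa]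
    have hRznorm : ‖R z‖ ≤ ‖z‖ * (1 - a' * t) := by
      have hbct := mul_le_mul_of_nonneg_right hbc ht0.le
      calc ‖R z‖ = ‖z‖ * ‖1 + v‖ := by rw [hRzv, norm_mul]
        _ ≤ ‖z‖ * (1 - a' * t) := by
            apply mul_le_mul_of_nonneg_left _ hznorm.le
            calc ‖1 + v‖ = ‖(1 + u) + (v - u)‖ := by congr 1; ring
              _ ≤ ‖1 + u‖ + ‖v - u‖ := norm_add_le _ _
              _ ≤ (1 - a * t + (b/2) * t ^ 2) + C * (ρ * t) := by linarith [h1u, hvu]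
              _ ≤ 1 - a' * t := by linarith [hbct]
    have ha't : a' * t ≤ 1/2 := by
      have := mul_le_mul_of_nonneg_right ha'a.le ht0.le
      linarith
    have hRz0 : R z ≠ 0 := by rw [hRzv]; exact mul_ne_zero hz0 hwne
    have hRzρ : ‖R z‖ < ρ := by
      have h1 : 0 < ‖z‖ * (a' * t) := mul_pos hznorm (mul_pos ha'0 ht0)
      calc ‖R z‖ ≤ ‖z‖ * (1 - a' * t) := hRznorm
        _ < ‖z‖ := by linarith [h1]
        _ < ρ := hzρ
    -- argument estimate
    have hargmul : (R z).arg = z.arg + (1 + v).arg := by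
      rw [hRzv]
      apply Complex.arg_mul hz0 hwne
      constructor
      · linarith
      · linarith
    have hargRz : |(R z).arg| < β / 2 := by
      rw [hargmul]
      rcases le_or_gt |z.arg| (β/4) with hc | hc
      · have h3 := abs_le.1 hc
        rw [abs_lt]; constructor <;> linarith
      · have hCρε : C * ρ ≤ -RN * s0 := by
          have h1 : C * ρ ≤ K * ρ := by
            apply mul_le_mul_of_nonneg_right _ hρ0.le
            rw [hK]; linarith
          linarith [hρK, hεs]
        have himvu : |(v - u).im| ≤ C * (ρ * t) :=
          le_trans (Complex.abs_im_le_norm _) hvu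
        have himvu' := abs_le.1 himvu
        have hvim_eq : v.im = u.im + (v - u).im := by simp
        have hCρεt := mul_le_mul_of_nonneg_right hCρε ht0.le
        rcases le_or_gt 0 z.arg with hsgn | hsgn
        · have hθ4 : β/4 < z.arg := by rwa [abs_of_nonneg hsgn] at hc
          have hmθ4 : lam / 2 ≤ (m:ℝ) * z.arg := by
            have h := (mul_lt_mul_of_pos_left hθ4 hm0).le
            rw [hlam, ← hmR]; linarith
          have hsinm : s0 ≤ Real.sin ((m:ℝ) * z.arg) := by
            rw [hs0def]
            exact Real.sin_le_sin_of_le_of_le_pi_div_two (by linarith) (by linarith) hmθ4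
          have hvim : v.im ≤ 0 := by
            rw [hvim_eq]
            have h6 : u.im ≤ RN * t * s0 := by
              have key := mul_le_mul_of_nonpos_left hsinm hRNt
              calc u.im = RN * t * Real.sin ((m:ℝ)*z.arg) := by rw [huim]; ring
                _ ≤ RN * t * s0 := key
            linarith [himvu'.2, hCρεt]
          have hφ : (1 + v).arg ≤ 0 := by
            rcases lt_or_eq_of_le hvim with h | h
            · exact (Complex.arg_neg_iff.2 (by simpa using h)).le
            · have h0 : (1 + v).arg = 0 :=
                Complex.arg_eq_zero_iff.2 ⟨hwre.le, by simpa using h⟩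
              rw [h0]
          rw [abs_lt]; constructor <;> linarith
        · have hθ4 : z.arg < -(β/4) := by
            rw [abs_of_neg hsgn] at hc; linarith
          have hmθ4 : (m:ℝ) * z.arg ≤ -(lam / 2) := by
            have h := (mul_lt_mul_of_pos_left hθ4 hm0).le
            rw [hlam, ← hmR]; linarith [h]
          have hsinm : Real.sin ((m:ℝ) * z.arg) ≤ -s0 := by
            have h := Real.sin_le_sin_of_le_of_le_pi_div_two
              (by linarith : -(Real.pi/2) ≤ (m:ℝ) * z.arg) (by linarith) hmθ4
            rwa [Real.sin_neg, ← hs0def] at h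
          have hvim : 0 ≤ v.im := by
            rw [hvim_eq]
            have h6 : -RN * t * s0 ≤ u.im := by
              have key := mul_le_mul_of_nonpos_left hsinm hRNt
              calc -RN * t * s0 = RN * t * (-s0) := by ring
                _ ≤ RN * t * Real.sin ((m:ℝ)*z.arg) := key
                _ = u.im := by rw [huim]; ring
            linarith [himvu'.1, hCρεt]
          have hφ : 0 ≤ (1 + v).arg := Complex.arg_nonneg_iff.2 (by simpa using hvim)
          rw [abs_lt]; constructor <;> linarith
    refine ⟨⟨hRz0, hargRz, hRzρ⟩, ?_⟩
    have hkey1 : ‖R z‖ ^ m ≤ t * (1 - a' * t) ^ m := by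
      calc ‖R z‖ ^ m ≤ (‖z‖ * (1 - a' * t)) ^ m :=
            pow_le_pow_left₀ (norm_nonneg _) hRznorm m
        _ = t * (1 - a' * t) ^ m := by rw [mul_pow, htdef]
    have hexp := one_sub_pow_mul_le (a' * t) m (mul_nonneg ha'0.le ht0.le) (by linarith)
    have hνt : (1:ℝ) + ν * t = 1 + (m:ℝ) * (a' * t) := by rw [hνa']; ring
    calc ‖R z‖ ^ m * (1 + ν * t) ≤ (t * (1 - a' * t) ^ m) * (1 + ν * t) := by
          apply mul_le_mul_of_nonneg_right hkey1 (by linarith [mul_pos hν0 ht0])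
      _ = t * ((1 - a' * t) ^ m * (1 + (m:ℝ) * (a' * t))) := by rw [hνt]; ring
      _ ≤ t * 1 := mul_le_mul_of_nonneg_left hexp ht0.le
      _ = t := mul_one t
  refine ⟨ρ, hρ0, hρρ₀, fun z hz => (step z hz).1, ?_⟩
  intro j z hz
  have hz0 : z ≠ 0 := hz.1
  have hT0 : (0:ℝ) < ‖z‖ ^ m := pow_pos (norm_pos_iff.2 hz0) m
  have main : ∀ j : ℕ, R^[j] z ∈ sector β ρ ∧
      ‖R^[j] z‖ ^ m * (1 + (j:ℝ) * ν * ‖z‖ ^ m) ≤ ‖z‖ ^ m := by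
    intro j
    induction j with
    | zero => exact ⟨by simpa using hz, by simp⟩
    | succ n ih =>
      obtain ⟨hmem, hineq⟩ := ih
      obtain ⟨hmem', hkey⟩ := step _ hmem
      rw [Function.iterate_succ_apply']
      refine ⟨hmem', ?_⟩
      have hw0 : R^[n] z ≠ 0 := hmem.1
      have hs0' : (0:ℝ) < ‖R^[n] z‖ ^ m := pow_pos (norm_pos_iff.2 hw0) m
      have hr0 : (0:ℝ) ≤ ‖R (R^[n] z)‖ ^ m := by positivity
      push_cast
      set T := ‖z‖ ^ m
      set s := ‖R^[n] z‖ ^ m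
      set r := ‖R (R^[n] z)‖ ^ m
      -- hkey : r * (1 + ν * s) ≤ s ; hineq : s * (1 + n * ν * T) ≤ T
      -- goal : r * (1 + (n+1) * ν * T) ≤ T
      exact iterate_combine r s T ν (n:ℝ) hr0 hν0.le hs0'.le hT0.le (Nat.cast_nonneg n)
        hkey hineq
  obtain ⟨hmem, hineq⟩ := main j
  have hD : (0:ℝ) < 1 + (j:ℝ) * ν * ‖z‖ ^ m := by positivity
  have hq : ‖R^[j] z‖ ^ m ≤ ‖z‖ ^ m / (1 + (j:ℝ) * ν * ‖z‖ ^ m) := by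
    rw [le_div_iff₀ hD]; exact hineq
  have hmne : m ≠ 0 := by omega
  have hexp_eq : (1:ℝ) / ((N:ℝ) - 1) = ((m:ℕ):ℝ)⁻¹ := by rw [← hmR, one_div]
  rw [hexp_eq]
  calc ‖R^[j] z‖ = (‖R^[j] z‖ ^ m) ^ (((m:ℕ):ℝ)⁻¹) :=
        (Real.pow_rpow_inv_natCast (norm_nonneg _) hmne).symm
    _ ≤ (‖z‖ ^ m / (1 + (j:ℝ) * ν * ‖z‖ ^ m)) ^ (((m:ℕ):ℝ)⁻¹) :=
        Real.rpow_le_rpow (by positivity) hq (by positivity)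
    _ = (‖z‖ ^ m) ^ (((m:ℕ):ℝ)⁻¹) / ((1 + (j:ℝ) * ν * ‖z‖ ^ m)) ^ (((m:ℕ):ℝ)⁻¹) :=
        Real.div_rpow (by positivity) hD.le _
    _ = ‖z‖ / (1 + (j:ℝ) * ν * ‖z‖ ^ m) ^ (((m:ℕ):ℝ)⁻¹) := by
        rw [Real.pow_rpow_inv_natCast (norm_nonneg _) hmne]
end

section
/- Let N ≥ 2 be an integer and let R : [0,ρ₀) → ℝ be a differentiable map with R(t) = t + R_N·t^N + O(t^{N+1}) and R_N < 0. Then for any real numbers ν, μ with 0 < ν < (N−1)·|R_N| < μ there exists ρ ∈ (0,ρ₀] such that for every integer j ≥ 1 and every t ∈ (0,ρ): t/(1 + j·μ·t^{N−1})^{1/(N−1)} < R^j(t) < t/(1 + j·ν·t^{N−1})^{1/(N−1)}. In particular, R maps (0,ρ) into itself. -/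
open Set Filter Topology

private lemma rpow_inv_pow_aux (m : ℕ) (hm : m ≠ 0) {A : ℝ} (hA : 0 < A) :
    (A ^ ((1:ℝ)/(m:ℝ))) ^ m = A := by
  rw [← Real.rpow_natCast (A ^ ((1:ℝ)/(m:ℝ))) m, ← Real.rpow_mul hA.le,
    one_div, inv_mul_cancel₀ (by exact_mod_cast hm), Real.rpow_one]

private lemma inv_pow_lt_inv_pow_iff_aux (m : ℕ) (hm : m ≠ 0) {a b : ℝ}
    (ha : 0 < a) (hb : 0 < b) :
    a < b ↔ 1/b^m < 1/a^m := by
  rw [div_lt_div_iff₀ (pow_pos hb m) (pow_pos ha m), one_mul, one_mul]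
  constructor
  · exact fun h => pow_lt_pow_left₀ h ha.le hm
  · intro h
    exact lt_of_pow_lt_pow_left₀ m hb.le h

private lemma key_lt_aux (m : ℕ) (hm : m ≠ 0) {t r c : ℝ} (ht : 0 < t) (hr : 0 < r)
    (hc : 0 < c) :
    (t / (1 + c * t^m) ^ ((1:ℝ)/(m:ℝ)) < r ↔ 1/r^m < 1/t^m + c) := by
  have hA : (0:ℝ) < 1 + c * t^m := by positivity
  have hB : (0:ℝ) < (1 + c * t^m) ^ ((1:ℝ)/(m:ℝ)) := Real.rpow_pos_of_pos hA _
  have hL : 0 < t / (1 + c * t^m) ^ ((1:ℝ)/(m:ℝ)) := div_pos ht hB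
  rw [inv_pow_lt_inv_pow_iff_aux m hm hL hr]
  have : 1/(t / (1 + c * t^m) ^ ((1:ℝ)/(m:ℝ)))^m = 1/t^m + c := by
    rw [div_pow, rpow_inv_pow_aux m hm hA]
    field_simp
  rw [this]

private lemma key_gt_aux (m : ℕ) (hm : m ≠ 0) {t r c : ℝ} (ht : 0 < t) (hr : 0 < r)
    (hc : 0 < c) :
    (r < t / (1 + c * t^m) ^ ((1:ℝ)/(m:ℝ)) ↔ 1/t^m + c < 1/r^m) := by
  have hA : (0:ℝ) < 1 + c * t^m := by positivity
  have hB : (0:ℝ) < (1 + c * t^m) ^ ((1:ℝ)/(m:ℝ)) := Real.rpow_pos_of_pos hA _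
  have hL : 0 < t / (1 + c * t^m) ^ ((1:ℝ)/(m:ℝ)) := div_pos ht hB
  rw [inv_pow_lt_inv_pow_iff_aux m hm hr hL]
  have : 1/(t / (1 + c * t^m) ^ ((1:ℝ)/(m:ℝ)))^m = 1/t^m + c := by
    rw [div_pow, rpow_inv_pow_aux m hm hA]
    field_simp
  rw [this]

private lemma alg_id_aux (m : ℕ) (s q S : ℝ) (hs : s ≠ 0) (hq : q ≠ 0)
    (hgeom : S * (q - 1) = q ^ m - 1) :
    1/(s*q)^m - 1/s^m = -(((s*q - s)/(s*s^m)) * S / q^m) := by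
  have hsm : s^m ≠ 0 := pow_ne_zero _ hs
  have hqm : q^m ≠ 0 := pow_ne_zero _ hq
  rw [show (s*q - s)/(s*s^m) * S = (q^m - 1)/s^m by
    rw [← hgeom, div_mul_eq_mul_div, div_eq_div_iff (mul_ne_zero hs hsm) hsm]; ring]
  rw [mul_pow]
  field_simp
  ring

private lemma tendsto_E_aux (N : ℕ) (R : ℝ → ℝ) (RN C δ : ℝ) (hδ : 0 < δ)
    (hbound : ∀ t : ℝ, 0 ≤ t → t < δ → |R t - (t + RN * t ^ N)| ≤ C * t ^ (N + 1)) :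
    Tendsto (fun s => (R s - s)/s^N) (𝓝[>](0:ℝ)) (𝓝 RN) := by
  rw [tendsto_iff_norm_sub_tendsto_zero]
  have hb : ∀ᶠ s in 𝓝[>](0:ℝ), ‖(R s - s)/s^N - RN‖ ≤ C * s := by
    filter_upwards [Ioo_mem_nhdsGT hδ] with s hs
    obtain ⟨hs0, hsδ⟩ := hs
    have hsN : (0:ℝ) < s^N := pow_pos hs0 N
    have h1 : (R s - s)/s^N - RN = (R s - (s + RN * s^N))/s^N := by
      field_simp; ring
    rw [Real.norm_eq_abs, h1, abs_div, abs_of_pos hsN, div_le_iff₀ hsN]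
    calc |R s - (s + RN * s ^ N)| ≤ C * s ^ (N+1) := hbound s hs0.le hsδ
      _ = C * s * s ^ N := by ring
  have hg : Tendsto (fun s : ℝ => C * s) (𝓝[>](0:ℝ)) (𝓝 0) := by
    have : Tendsto (fun s : ℝ => C * s) (𝓝 0) (𝓝 (C * 0)) := tendsto_id.const_mul C
    simpa using this.mono_left nhdsWithin_le_nhds
  exact squeeze_zero_norm' (by simpa using hb) hg

private lemma tendsto_q_aux (N : ℕ) (hN : 2 ≤ N) (R : ℝ → ℝ) (RN : ℝ)
    (hE : Tendsto (fun s => (R s - s)/s^N) (𝓝[>](0:ℝ)) (𝓝 RN)) :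
    Tendsto (fun s => R s / s) (𝓝[>](0:ℝ)) (𝓝 1) := by
  have hpow : Tendsto (fun s : ℝ => s^(N-1)) (𝓝[>](0:ℝ)) (𝓝 0) := by
    have : Tendsto (fun s : ℝ => s^(N-1)) (𝓝 0) (𝓝 ((0:ℝ)^(N-1))) :=
      (continuous_pow (N-1)).tendsto 0
    rw [zero_pow (by omega)] at this
    exact this.mono_left nhdsWithin_le_nhds
  have h : Tendsto (fun s => 1 + ((R s - s)/s^N) * s^(N-1)) (𝓝[>](0:ℝ)) (𝓝 (1 + RN * 0)) :=
    tendsto_const_nhds.add (hE.mul hpow)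
  rw [show (1:ℝ) + RN * 0 = 1 by ring] at h
  apply h.congr'
  filter_upwards [self_mem_nhdsWithin] with s hs
  have hs0 : (0:ℝ) < s := hs
  have hsN : s^N = s * s^(N-1) := by
    rw [← pow_succ']; congr 1; omega
  field_simp [hsN]
  rw [hsN]; ring

private lemma tendsto_F_aux (N : ℕ) (hN : 2 ≤ N) (R : ℝ → ℝ) (RN : ℝ)
    (hE : Tendsto (fun s => (R s - s)/s^N) (𝓝[>](0:ℝ)) (𝓝 RN)) :
    Tendsto (fun s => 1/(R s)^(N-1) - 1/s^(N-1)) (𝓝[>](0:ℝ))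
      (𝓝 (((N:ℝ)-1) * (-RN))) := by
  set m := N - 1 with hm
  have hm1 : 1 ≤ m := by omega
  have hq := tendsto_q_aux N hN R RN hE
  have hsum : Tendsto (fun s => ∑ i ∈ Finset.range m, (R s / s)^i) (𝓝[>](0:ℝ))
      (𝓝 (m:ℝ)) := by
    have : Tendsto (fun s => ∑ i ∈ Finset.range m, (R s / s)^i) (𝓝[>](0:ℝ))
        (𝓝 (∑ i ∈ Finset.range m, (1:ℝ)^i)) :=
      tendsto_finset_sum _ (fun i _ => hq.pow i)
    simpa using this
  have hqm : Tendsto (fun s => (R s / s)^m) (𝓝[>](0:ℝ)) (𝓝 1) := by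
    simpa using hq.pow m
  have hG : Tendsto
      (fun s => -(((R s - s)/s^N) * (∑ i ∈ Finset.range m, (R s / s)^i) / (R s / s)^m))
      (𝓝[>](0:ℝ)) (𝓝 (-(RN * (m:ℝ) / 1))) :=
    ((hE.mul hsum).div hqm one_ne_zero).neg
  have hmcast : ((m:ℕ):ℝ) = (N:ℝ) - 1 := by
    rw [hm, Nat.cast_sub (by omega : 1 ≤ N)]; norm_num
  have hL : -(RN * (m:ℝ) / 1) = ((N:ℝ)-1) * (-RN) := by rw [hmcast]; ring
  rw [hL] at hG
  apply hG.congr'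
  have hRpos : ∀ᶠ s in 𝓝[>](0:ℝ), 0 < R s / s :=
    hq.eventually (eventually_gt_nhds one_pos)
  filter_upwards [hRpos, self_mem_nhdsWithin] with s hqs hs
  have hs0 : (0:ℝ) < s := hs
  set q := R s / s with hqdef
  have hRs : R s = s * q := by rw [hqdef]; field_simp
  have hgeom : (∑ i ∈ Finset.range m, q ^ i) * (q - 1) = q ^ m - 1 := geom_sum_mul q m
  have hsN : s^N = s * s^m := by rw [← pow_succ']; congr 1; omega
  rw [hsN, hRs]
  exact (alg_id_aux m s q _ (ne_of_gt hs0) (ne_of_gt hqs) hgeom).symm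

/-- Lemma 5.1: two-sided estimates for the iterates of a real map
`R(t) = t + R_N t^N + O(t^{N+1})` with `R_N < 0` on a small interval `(0,ρ)`. -/
theorem stmt_14
    (N : ℕ) (hN : 2 ≤ N) (ρ₀ : ℝ) (hρ₀ : 0 < ρ₀)
    (R : ℝ → ℝ) (hdiff : DifferentiableOn ℝ R (Ico 0 ρ₀))
    (RN : ℝ) (hRN : RN < 0)
    (hRexp : ∃ C > (0:ℝ), ∃ δ > (0:ℝ), ∀ t : ℝ, 0 ≤ t → t < δ →
      |R t - (t + RN * t ^ N)| ≤ C * t ^ (N + 1)) :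
    ∀ ν μ : ℝ, 0 < ν → ν < ((N:ℝ) - 1) * |RN| → ((N:ℝ) - 1) * |RN| < μ →
      ∃ ρ : ℝ, 0 < ρ ∧ ρ ≤ ρ₀ ∧
        (∀ j : ℕ, 1 ≤ j → ∀ t ∈ Ioo (0:ℝ) ρ,
          t / (1 + (j:ℝ) * μ * t ^ (N - 1)) ^ ((1:ℝ) / ((N:ℝ) - 1)) < R^[j] t ∧
          R^[j] t < t / (1 + (j:ℝ) * ν * t ^ (N - 1)) ^ ((1:ℝ) / ((N:ℝ) - 1))) ∧
        MapsTo R (Ioo 0 ρ) (Ioo 0 ρ) := by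
  intro ν μ hν hνlt hμlt
  obtain ⟨C, hC, δ, hδ, hbound⟩ := hRexp
  set m := N - 1 with hm
  have hm0 : m ≠ 0 := by omega
  have hmcast : ((m:ℕ):ℝ) = (N:ℝ) - 1 := by
    rw [hm, Nat.cast_sub (by omega : 1 ≤ N)]; norm_num
  have habs : -RN = |RN| := (abs_of_neg hRN).symm
  have hE := tendsto_E_aux N R RN C δ hδ hbound
  have hF := tendsto_F_aux N hN R RN hE
  have hq := tendsto_q_aux N hN R RN hE
  -- eventual one-step estimate
  have hev : ∀ᶠ s in 𝓝[>](0:ℝ),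
      0 < R s ∧ ν < 1/(R s)^m - 1/s^m ∧ 1/(R s)^m - 1/s^m < μ := by
    have h1 : ∀ᶠ s in 𝓝[>](0:ℝ), 0 < R s := by
      filter_upwards [hq.eventually (eventually_gt_nhds one_pos), self_mem_nhdsWithin]
        with s h hs
      have hs0 : (0:ℝ) < s := hs
      have := mul_pos h hs0
      rwa [div_mul_cancel₀ _ (ne_of_gt hs0)] at this
    have h2 : ∀ᶠ s in 𝓝[>](0:ℝ), 1/(R s)^m - 1/s^m ∈ Ioo ν μ := by
      apply hF.eventually
      apply Ioo_mem_nhds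
      · rw [habs]; exact hνlt
      · rw [habs]; exact hμlt
    filter_upwards [h1, h2] with s hs1 hs2
    exact ⟨hs1, hs2.1, hs2.2⟩
  obtain ⟨ε, hε, hsub⟩ := mem_nhdsGT_iff_exists_Ioo_subset.mp hev
  have hε0 : (0:ℝ) < ε := hε
  refine ⟨min ε ρ₀, lt_min hε0 hρ₀, min_le_right _ _, ?_, ?_⟩
  case _ =>
    -- one-step estimate on Ioo 0 ρ
    have hstep : ∀ s ∈ Ioo (0:ℝ) (min ε ρ₀),
        0 < R s ∧ ν < 1/(R s)^m - 1/s^m ∧ 1/(R s)^m - 1/s^m < μ := by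
      intro s hs
      exact hsub ⟨hs.1, lt_of_lt_of_le hs.2 (min_le_left _ _)⟩
    -- main induction
    have main : ∀ j : ℕ, 1 ≤ j → ∀ t ∈ Ioo (0:ℝ) (min ε ρ₀),
        0 < R^[j] t ∧ 1/t^m + (j:ℝ)*ν < 1/(R^[j] t)^m ∧
          1/(R^[j] t)^m < 1/t^m + (j:ℝ)*μ := by
      intro j hj
      induction j, hj using Nat.le_induction with
      | base =>
        intro t ht
        obtain ⟨h0, hl, hu⟩ := hstep t ht
        rw [Function.iterate_one]
        push_cast
        exact ⟨h0, by linarith, by linarith⟩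
      | succ j hj IH =>
        intro t ht
        obtain ⟨hr0, hl, hu⟩ := IH t ht
        set r := R^[j] t with hr
        have ht0 : (0:ℝ) < t := ht.1
        have hjν : (0:ℝ) < (j:ℝ) * ν := by
          have : (1:ℝ) ≤ (j:ℝ) := by exact_mod_cast hj
          nlinarith
        have hrt : r < t := by
          refine (inv_pow_lt_inv_pow_iff_aux m hm0 hr0 ht0).mpr ?_
          linarith
        have hrmem : r ∈ Ioo (0:ℝ) (min ε ρ₀) := ⟨hr0, lt_trans hrt ht.2⟩
        obtain ⟨hR0, hl1, hu1⟩ := hstep r hrmem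
        rw [Function.iterate_succ_apply', ← hr]
        push_cast
        refine ⟨hR0, by linarith, by linarith⟩
    intro j hj t ht
    obtain ⟨hr0, hl, hu⟩ := main j hj t ht
    have ht0 : (0:ℝ) < t := ht.1
    have hjpos : (1:ℝ) ≤ (j:ℝ) := by exact_mod_cast hj
    have hμ0 : (0:ℝ) < μ := by
      have h1 : (0:ℝ) < ((N:ℝ) - 1) * |RN| := by
        apply mul_pos
        · have : (2:ℝ) ≤ (N:ℝ) := by exact_mod_cast hN
          linarith
        · exact abs_pos.mpr (ne_of_lt hRN)
      linarith
    have hcμ : (0:ℝ) < (j:ℝ) * μ := by nlinarith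
    have hcν : (0:ℝ) < (j:ℝ) * ν := by nlinarith
    constructor
    · rw [← hmcast]
      exact (key_lt_aux m hm0 ht0 hr0 hcμ).mpr hu
    · rw [← hmcast]
      exact (key_gt_aux m hm0 ht0 hr0 hcν).mpr hl
  case _ =>
    intro s hs
    have hsub' : s ∈ Ioo (0:ℝ) ε := ⟨hs.1, lt_of_lt_of_le hs.2 (min_le_left _ _)⟩
    obtain ⟨h0, hl, _⟩ := hsub hsub'
    have hRs : R s < s := by
      refine (inv_pow_lt_inv_pow_iff_aux m hm0 h0 hs.1).mpr ?_
      linarith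
    exact ⟨h0, lt_of_lt_of_le (lt_of_lt_of_le hRs hs.2.le) le_rfl⟩
end

section
/- Let N ≥ 2 be an integer and let R : [0,ρ₀) → ℝ be a differentiable map with R(t) = t + R_N·t^N + O(t^{N+1}), R_N < 0, whose derivative satisfies DR(t) = 1 + N·R_N·t^{N−1} + O(t^N). For any real numbers ν, μ with 0 < ν < (N−1)·|R_N| < μ, set κ := ν/μ. Then there exists ρ ∈ (0,ρ₀] such that for every j ∈ ℕ and every t ∈ (0,ρ): DR^j(t) ≤ 1/(1 + j·μ·t^{N−1})^{κN/(N−1)}, where R^j denotes the j-th iterate of R and DR^j its derivative. -/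
open Set Filter

set_option maxHeartbeats 1000000 in
/-- Lemma 5.2: estimates for the derivatives of the iterates of a real map
`R(t) = t + R_N t^N + O(t^{N+1})`, `R_N < 0`, with
`R'(t) = 1 + N R_N t^{N-1} + O(t^N)`. -/
theorem stmt_15
    (N : ℕ) (hN : 2 ≤ N) (ρ₀ : ℝ) (hρ₀ : 0 < ρ₀)
    (R : ℝ → ℝ) (hdiff : DifferentiableOn ℝ R (Ico 0 ρ₀))
    (RN : ℝ) (hRN : RN < 0)
    (hRexp : ∃ C > (0:ℝ), ∃ δ > (0:ℝ), ∀ t : ℝ, 0 ≤ t → t < δ →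
      |R t - (t + RN * t ^ N)| ≤ C * t ^ (N + 1))
    (hDRexp : ∃ C > (0:ℝ), ∃ δ > (0:ℝ), ∀ t : ℝ, 0 < t → t < δ →
      |deriv R t - (1 + (N:ℝ) * RN * t ^ (N - 1))| ≤ C * t ^ N)
    (ν μ : ℝ) (hν0 : 0 < ν) (hν : ν < ((N:ℝ) - 1) * |RN|)
    (hμ : ((N:ℝ) - 1) * |RN| < μ) :
    ∃ ρ : ℝ, 0 < ρ ∧ ρ ≤ ρ₀ ∧
      ∀ j : ℕ, ∀ t ∈ Ioo (0:ℝ) ρ,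
        deriv (R^[j]) t ≤
          1 / (1 + (j:ℝ) * μ * t ^ (N - 1)) ^ ((ν / μ) * (N:ℝ) / ((N:ℝ) - 1)) := by
  obtain ⟨C₁, hC₁, δ₁, hδ₁, hB1⟩ := hRexp
  obtain ⟨C₂, hC₂, δ₂, hδ₂, hB2⟩ := hDRexp
  set a : ℝ := -RN with ha_def
  set n : ℝ := (N : ℝ) with hn_def
  clear_value a n
  have ha : 0 < a := by rw [ha_def]; exact neg_pos.mpr hRN
  have habs : |RN| = a := by rw [ha_def]; exact abs_of_neg hRN
  rw [habs] at hν hμ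
  have hn2 : (2:ℝ) ≤ n := by rw [hn_def]; exact_mod_cast hN
  have hn1 : (1:ℝ) ≤ n - 1 := by linarith
  have hn1pos : (0:ℝ) < n - 1 := by linarith
  have hn0 : (0:ℝ) < n := by linarith
  -- auxiliary constants
  set μ' : ℝ := ((n - 1) * a + μ) / 2 with hμ'_def
  clear_value μ'
  have hμ'l : (n - 1) * a < μ' := by rw [hμ'_def]; linarith
  have hμ'u : μ' < μ := by rw [hμ'_def]; linarith
  have hμ'pos : 0 < μ' := by linarith [hμ'l, mul_pos hn1pos ha]
  have hμpos : 0 < μ := lt_trans hμ'pos hμ'u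
  set b : ℝ := μ' / (n - 1) with hb_def
  clear_value b
  have hbpos : 0 < b := by rw [hb_def]; exact div_pos hμ'pos hn1pos
  have hba : a < b := by
    rw [hb_def, lt_div_iff₀ hn1pos]; linarith [hμ'l]
  have hbμ' : (n - 1) * b = μ' := by
    rw [hb_def, mul_comm]; exact div_mul_cancel₀ μ' (ne_of_gt hn1pos)
  set ν' : ℝ := (ν * n / (n - 1) + n * a) / 2 with hν'_def
  clear_value ν'
  have hνna : ν * n / (n - 1) < n * a := by
    rw [div_lt_iff₀ hn1pos]
    calc ν * n < ((n-1)*a) * n := mul_lt_mul_of_pos_right hν hn0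
      _ = n * a * (n - 1) := by ring
  have hν'l : ν * n / (n - 1) < ν' := by rw [hν'_def]; linarith
  have hν'u : ν' < n * a := by rw [hν'_def]; linarith
  have hν'pos : 0 < ν' := by
    have h0 : 0 < ν * n / (n - 1) := div_pos (mul_pos hν0 hn0) hn1pos
    linarith
  set c : ℝ := ν' / μ with hc_def
  clear_value c
  have hcpos : 0 < c := by rw [hc_def]; exact div_pos hν'pos hμpos
  set x₀ : ℝ := (μ - μ') / (μ * (n - 1)) with hx₀_def
  clear_value x₀
  have hx₀pos : 0 < x₀ := by
    rw [hx₀_def]; exact div_pos (by linarith) (mul_pos hμpos hn1pos)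
  have hx₀lt1 : x₀ < 1 := by
    rw [hx₀_def, div_lt_one (mul_pos hμpos hn1pos)]
    have h7 := mul_le_mul_of_nonneg_left hn1 hμpos.le
    rw [mul_one] at h7
    linarith
  have hna : (0:ℝ) < n * a := mul_pos hn0 ha
  -- choice of ρ
  set ρ : ℝ := min ρ₀ (min δ₁ (min δ₂ (min 1 (min ((b - a)/C₁) (min (a/C₁)
      (min (x₀/b) (min ((n*a - ν')/C₂) (1/(n*a + C₂))))))))) with hρ_def
  clear_value ρ
  have hρpos : 0 < ρ := by
    rw [hρ_def]
    refine lt_min hρ₀ (lt_min hδ₁ (lt_min hδ₂ (lt_min one_pos (lt_min ?_ (lt_min ?_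
      (lt_min ?_ (lt_min ?_ ?_)))))))
    · exact div_pos (by linarith) hC₁
    · exact div_pos ha hC₁
    · exact div_pos hx₀pos hbpos
    · exact div_pos (by linarith) hC₂
    · exact div_pos one_pos (by linarith)
  have hρρ₀ : ρ ≤ ρ₀ := by rw [hρ_def]; exact min_le_left _ _
  have hρδ₁ : ρ ≤ δ₁ := by
    rw [hρ_def]; exact le_trans (min_le_right _ _) (min_le_left _ _)
  have hρδ₂ : ρ ≤ δ₂ := by
    rw [hρ_def]
    exact le_trans (min_le_right _ _) (le_trans (min_le_right _ _) (min_le_left _ _))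
  have hρ1 : ρ ≤ 1 := by
    rw [hρ_def]
    exact le_trans (min_le_right _ _) (le_trans (min_le_right _ _)
      (le_trans (min_le_right _ _) (min_le_left _ _)))
  have hρ5 : ρ ≤ (b - a)/C₁ := by
    rw [hρ_def]
    exact le_trans (min_le_right _ _) (le_trans (min_le_right _ _)
      (le_trans (min_le_right _ _) (le_trans (min_le_right _ _) (min_le_left _ _))))
  have hρ6 : ρ ≤ a/C₁ := by
    rw [hρ_def]
    exact le_trans (min_le_right _ _) (le_trans (min_le_right _ _)
      (le_trans (min_le_right _ _) (le_trans (min_le_right _ _) (le_trans (min_le_right _ _)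
      (min_le_left _ _)))))
  have hρ7 : ρ ≤ x₀/b := by
    rw [hρ_def]
    exact le_trans (min_le_right _ _) (le_trans (min_le_right _ _)
      (le_trans (min_le_right _ _) (le_trans (min_le_right _ _) (le_trans (min_le_right _ _)
      (le_trans (min_le_right _ _) (min_le_left _ _))))))
  have hρ8 : ρ ≤ (n*a - ν')/C₂ := by
    rw [hρ_def]
    exact le_trans (min_le_right _ _) (le_trans (min_le_right _ _)
      (le_trans (min_le_right _ _) (le_trans (min_le_right _ _) (le_trans (min_le_right _ _)
      (le_trans (min_le_right _ _) (le_trans (min_le_right _ _) (min_le_left _ _)))))))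
  have hρ9 : ρ ≤ 1/(n*a + C₂) := by
    rw [hρ_def]
    exact le_trans (min_le_right _ _) (le_trans (min_le_right _ _)
      (le_trans (min_le_right _ _) (le_trans (min_le_right _ _) (le_trans (min_le_right _ _)
      (le_trans (min_le_right _ _) (le_trans (min_le_right _ _) (min_le_right _ _)))))))
  refine ⟨ρ, hρpos, hρρ₀, ?_⟩
  intro j t ht
  obtain ⟨ht0, htρ⟩ := ht
  have ht1 : t ≤ 1 := le_of_lt (lt_of_lt_of_le htρ hρ1)
  have hN1 : 1 ≤ N - 1 := by omega
  have hNs : N - 1 + 1 = N := by omega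
  have htN : 0 < t ^ (N-1) := pow_pos ht0 _
  have htNt : t ^ (N-1) ≤ t := by
    calc t ^ (N-1) ≤ t ^ 1 := pow_le_pow_of_le_one ht0.le ht1 hN1
      _ = t := pow_one t
  -- main induction
  have key : ∀ j : ℕ, (0 < R^[j] t ∧ R^[j] t ≤ t) ∧
      1 / (R^[j] t) ^ (N-1) ≤ 1 / t ^ (N-1) + (j:ℝ) * μ ∧
      DifferentiableAt ℝ (R^[j]) t ∧ 0 ≤ deriv (R^[j]) t ∧
      deriv (R^[j]) t * (1 + (j:ℝ) * μ * t ^ (N-1)) ^ c ≤ 1 := by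
    intro j
    induction j with
    | zero =>
      have h1 : R^[0] = id := Function.iterate_zero R
      rw [h1]
      refine ⟨⟨ht0, le_rfl⟩, by simp, differentiableAt_id, ?_, ?_⟩
      · simp
      · simp [Real.one_rpow]
    | succ j ih =>
      obtain ⟨⟨hs0, hst⟩, hrec, hdiffj, hDj0, hDj⟩ := ih
      set s : ℝ := R^[j] t with hs_def
      set S : ℝ := s ^ (N-1) with hS_def
      clear_value s S
      have hS0 : 0 < S := by rw [hS_def]; exact pow_pos hs0 _
      have hsρ : s < ρ := lt_of_le_of_lt hst htρ
      have hs1 : s ≤ 1 := le_trans hst ht1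
      have hSt : S ≤ t ^ (N-1) := by rw [hS_def]; exact pow_le_pow_left₀ hs0.le hst _
      have hSs : S ≤ s := by
        rw [hS_def]
        calc s ^ (N-1) ≤ s ^ 1 := pow_le_pow_of_le_one hs0.le hs1 hN1
          _ = s := pow_one s
      have hSle_t : S ≤ t := le_trans hSt htNt
      have hpowN : s ^ N = S * s := by rw [hS_def, ← pow_succ, hNs]
      have hpowN1 : s ^ (N+1) = S * s * s := by rw [← hpowN, pow_succ]
      have hRN' : RN = -a := by rw [ha_def]; ring
      have hnN : (N:ℝ) = n := hn_def.symm
      -- bounds on R s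
      have hb1 := hB1 s hs0.le (lt_of_lt_of_le hsρ hρδ₁)
      rw [abs_le, hRN', hpowN, hpowN1] at hb1
      have hC₁s : C₁ * s ≤ b - a := by
        have h1 : s ≤ (b - a)/C₁ := le_of_lt (lt_of_lt_of_le hsρ hρ5)
        calc C₁ * s ≤ C₁ * ((b-a)/C₁) := mul_le_mul_of_nonneg_left h1 hC₁.le
          _ = b - a := by rw [mul_comm]; exact div_mul_cancel₀ _ (ne_of_gt hC₁)
      have hC₁s' : C₁ * s ≤ a := by
        have h1 : s ≤ a/C₁ := le_of_lt (lt_of_lt_of_le hsρ hρ6)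
        calc C₁ * s ≤ C₁ * (a/C₁) := mul_le_mul_of_nonneg_left h1 hC₁.le
          _ = a := by rw [mul_comm]; exact div_mul_cancel₀ _ (ne_of_gt hC₁)
      have hSsnn : (0:ℝ) ≤ S * s := mul_nonneg hS0.le hs0.le
      have hRlow : s * (1 - b * S) ≤ R s := by
        have h := hb1.1
        linarith [h, mul_le_mul_of_nonneg_right hC₁s hSsnn]
      have hRup : R s ≤ s := by
        have h := hb1.2
        linarith [h, mul_le_mul_of_nonneg_right hC₁s' hSsnn]
      -- bS is small
      have hx : b * S ≤ x₀ := by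
        have h1 : s ≤ x₀/b := le_of_lt (lt_of_lt_of_le hsρ hρ7)
        calc b * S ≤ b * s := mul_le_mul_of_nonneg_left hSs hbpos.le
          _ ≤ b * (x₀/b) := mul_le_mul_of_nonneg_left h1 hbpos.le
          _ = x₀ := by rw [mul_comm]; exact div_mul_cancel₀ _ (ne_of_gt hbpos)
      have hx1 : b * S < 1 := lt_of_le_of_lt hx hx₀lt1
      have hnext0 : 0 < R s :=
        lt_of_lt_of_le (mul_pos hs0 (by linarith)) hRlow
      have hnextt : R s ≤ t := le_trans hRup hst
      have hit : R^[j+1] t = R s := by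
        rw [hs_def]; exact Function.iterate_succ_apply' R j t
      -- Bernoulli-type estimate
      have hcast : ((N - 1 : ℕ) : ℝ) = n - 1 := by
        rw [← hnN, Nat.cast_sub (by omega : 1 ≤ N)]; norm_num
      have hbern : 1 - (n-1) * (b*S) ≤ (1 - b*S) ^ (N-1) := by
        have h := one_add_mul_le_pow (a := -(b*S)) (by linarith) (N-1)
        rw [hcast] at h
        have e1 : 1 + (n-1) * -(b*S) = 1 - (n-1)*(b*S) := by ring
        have e2 : (1 + -(b*S)) = (1 - b*S) := by ring
        rw [e1, e2] at h
        exact h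
      have hxx : (b*S) * (μ * (n-1)) ≤ μ - μ' := by
        have h := hx
        rw [hx₀_def, le_div_iff₀ (mul_pos hμpos hn1pos)] at h
        linarith
      have hBern2 : 1 ≤ (1 - b*S) ^ (N-1) * (1 + μ * S) := by
        have hμS : (0:ℝ) ≤ μ * S := mul_nonneg hμpos.le hS0.le
        have h1 : (1 - (n-1)*(b*S)) * (1 + μ*S) ≤ (1 - b*S)^(N-1) * (1 + μ*S) :=
          mul_le_mul_of_nonneg_right hbern (by linarith)
        refine le_trans ?_ h1
        have hμ'S : μ' * S = (n-1) * (b*S) := by rw [← hbμ']; ring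
        have hx' : 0 ≤ (n-1)*(b*S) :=
          mul_nonneg (by linarith) (mul_nonneg hbpos.le hS0.le)
        have hμx : μ * ((n-1)*(b*S)) ≤ μ - μ' := by linarith [hxx]
        have hkey : ((n-1)*(b*S)) * (μ * ((n-1)*(b*S))) ≤ ((n-1)*(b*S)) * (μ - μ') :=
          mul_le_mul_of_nonneg_left hμx hx'
        have hP : μ' * (μ * S) = μ * ((n-1)*(b*S)) := by rw [← hμ'S]; ring
        have hP2 : ((n-1)*(b*S)) * (μ' * (μ * S))
            = ((n-1)*(b*S)) * (μ * ((n-1)*(b*S))) := by rw [hP]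
        have G' : μ' * 1 ≤ μ' * ((1 - (n-1)*(b*S))*(1+μ*S)) := by
          linarith [hkey, hP, hP2]
        exact (mul_le_mul_iff_right₀ hμ'pos).mp G'
      -- reciprocal estimate
      have hRsN : S ≤ (R s) ^ (N-1) * (1 + μ * S) := by
        have h1 : (s * (1 - b*S)) ^ (N-1) ≤ (R s) ^ (N-1) :=
          pow_le_pow_left₀ (mul_nonneg hs0.le (by linarith)) hRlow _
        rw [mul_pow] at h1
        have h2 : S * ((1 - b*S)^(N-1) * (1 + μ*S)) ≤ (R s)^(N-1) * (1 + μ*S) := by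
          have e1 : S * ((1 - b*S)^(N-1) * (1 + μ*S))
              = (s^(N-1) * (1 - b*S)^(N-1)) * (1 + μ*S) := by rw [hS_def]; ring
          rw [e1]
          exact mul_le_mul_of_nonneg_right h1
            (by linarith [mul_nonneg hμpos.le hS0.le])
        calc S = S * 1 := (mul_one S).symm
          _ ≤ S * ((1 - b*S)^(N-1) * (1 + μ*S)) :=
              mul_le_mul_of_nonneg_left hBern2 hS0.le
          _ ≤ (R s)^(N-1) * (1 + μ*S) := h2
      have hRpow : 0 < (R s) ^ (N-1) := pow_pos hnext0 _
      have hrec' : 1 / (R s) ^ (N-1) ≤ 1 / S + μ := by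
        rw [div_add' _ _ _ (ne_of_gt hS0), div_le_div_iff₀ hRpow hS0]
        linarith [hRsN]
      have hrecnext : 1 / (R^[j+1] t) ^ (N-1) ≤ 1 / t ^ (N-1) + ((j+1:ℕ):ℝ) * μ := by
        rw [hit]
        push_cast
        calc 1 / (R s) ^ (N-1) ≤ 1 / S + μ := hrec'
          _ ≤ (1 / t^(N-1) + (j:ℝ)*μ) + μ := by linarith
          _ = 1 / t^(N-1) + ((j:ℝ)+1)*μ := by ring
      -- derivative bounds at s
      have hb2 := hB2 s hs0 (lt_of_lt_of_le hsρ hρδ₂)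
      rw [abs_le, hRN', hpowN, ← hS_def] at hb2
      have hC₂s : C₂ * s ≤ n*a - ν' := by
        have h1 : s ≤ (n*a - ν')/C₂ := le_of_lt (lt_of_lt_of_le hsρ hρ8)
        calc C₂ * s ≤ C₂ * ((n*a - ν')/C₂) := mul_le_mul_of_nonneg_left h1 hC₂.le
          _ = n*a - ν' := by rw [mul_comm]; exact div_mul_cancel₀ _ (ne_of_gt hC₂)
      have hDRup : deriv R s ≤ 1 - ν' * S := by
        have h := hb2.2
        linarith [h, mul_le_mul_of_nonneg_right hC₂s hS0.le]
      have hDRlow : 0 ≤ deriv R s := by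
        have h := hb2.1
        have hh1 : n*a*S ≤ n*a*t := mul_le_mul_of_nonneg_left hSle_t hna.le
        have hSst : S * s ≤ t := by
          have h5 : S * s ≤ S * 1 := mul_le_mul_of_nonneg_left hs1 hS0.le
          rw [mul_one] at h5
          linarith
        have hh2 : C₂*(S*s) ≤ C₂*t := mul_le_mul_of_nonneg_left hSst hC₂.le
        have hh4 : (n*a+C₂)*ρ ≤ 1 := by
          calc (n*a+C₂)*ρ ≤ (n*a+C₂)*(1/(n*a+C₂)) :=
                mul_le_mul_of_nonneg_left hρ9 (by linarith)
            _ = 1 := mul_one_div_cancel (by linarith : n*a+C₂ ≠ 0)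
        have hh3 : (n*a+C₂)*t ≤ (n*a+C₂)*ρ :=
          mul_le_mul_of_nonneg_left htρ.le (by linarith)
        linarith [h, hh1, hh2, hh3, hh4]
      -- differentiability and chain rule
      have hdiffR : DifferentiableAt ℝ R s :=
        hdiff.differentiableAt (Ico_mem_nhds hs0 (lt_of_lt_of_le hsρ hρρ₀))
      have hdiffR' : DifferentiableAt ℝ R (R^[j] t) := by rw [← hs_def]; exact hdiffR
      have hdiffnext : DifferentiableAt ℝ (R^[j+1]) t := by
        rw [Function.iterate_succ']
        exact DifferentiableAt.comp t hdiffR' hdiffj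
      have hderiv : deriv (R^[j+1]) t = deriv R s * deriv (R^[j]) t := by
        rw [Function.iterate_succ', deriv_comp t hdiffR' hdiffj, ← hs_def]
      have hDnext0 : 0 ≤ deriv (R^[j+1]) t := by
        rw [hderiv]; exact mul_nonneg hDRlow hDj0
      -- the main multiplicative estimate
      set u : ℝ := μ * t ^ (N-1) with hu_def
      clear_value u
      have hu0 : 0 < u := by rw [hu_def]; positivity
      have hU0 : (0:ℝ) < 1 + (j:ℝ) * u := by
        have hj : (0:ℝ) ≤ (j:ℝ)*u := mul_nonneg (Nat.cast_nonneg j) hu0.le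
        linarith
      set y : ℝ := u / (1 + (j:ℝ)*u) with hy_def
      clear_value y
      have hy0 : 0 ≤ y := by rw [hy_def]; exact div_nonneg hu0.le hU0.le
      have hyU : (1 + (j:ℝ)*u) * y = u := by
        rw [hy_def]; exact mul_div_cancel₀ u (ne_of_gt hU0)
      -- S ≥ t^{N-1} / (1 + j u)
      have hslow : t ^ (N-1) ≤ S * (1 + (j:ℝ)*u) := by
        rw [div_add' _ _ _ (ne_of_gt htN)] at hrec
        have h1 : 1 / S ≤ (1 + (j:ℝ)*u)/t^(N-1) := by
          calc 1/S ≤ (1 + (j:ℝ)*μ*t^(N-1))/t^(N-1) := hrec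
            _ = (1 + (j:ℝ)*u)/t^(N-1) := by rw [hu_def]; ring_nf
        rw [div_le_div_iff₀ hS0 htN] at h1
        linarith [h1]
      have hcy : c * y ≤ ν' * S := by
        have h1 : c * y * (1+(j:ℝ)*u) = ν' * t^(N-1) := by
          have e : c * y * (1+(j:ℝ)*u) = c * ((1+(j:ℝ)*u) * y) := by ring
          rw [e, hyU, hc_def, hu_def]
          field_simp
        have h2 : c*y*(1+(j:ℝ)*u) ≤ ν'*S*(1+(j:ℝ)*u) := by
          rw [h1]
          have h6 := mul_le_mul_of_nonneg_left hslow hν'pos.le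
          linarith [h6]
        exact le_of_mul_le_mul_right h2 hU0
      have hA : deriv R s * (1+y)^c ≤ 1 := by
        have h2 : deriv R s ≤ Real.exp (-(c*y)) := by
          have h3 := Real.add_one_le_exp (-(c*y))
          linarith
        have h3 : (1+y)^c ≤ Real.exp (c*y) := by
          have h4 : (1+y : ℝ) ≤ Real.exp y := by linarith [Real.add_one_le_exp y]
          calc (1+y)^c ≤ (Real.exp y)^c :=
                Real.rpow_le_rpow (by linarith) h4 hcpos.le
            _ = Real.exp (y * c) := (Real.exp_mul y c).symm
            _ = Real.exp (c * y) := by rw [mul_comm]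
        calc deriv R s * (1+y)^c ≤ Real.exp (-(c*y)) * Real.exp (c*y) :=
              mul_le_mul h2 h3 (Real.rpow_nonneg (by linarith) c) (Real.exp_nonneg _)
          _ = 1 := by rw [← Real.exp_add]; simp
      have hDj' : deriv (R^[j]) t * (1 + (j:ℝ)*u)^c ≤ 1 := by
        have e1 : (j:ℝ)*u = (j:ℝ)*μ*t^(N-1) := by rw [hu_def]; ring
        rw [e1]
        exact hDj
      have hmain : deriv (R^[j+1]) t * (1 + ((j+1:ℕ):ℝ)*μ*t^(N-1))^c ≤ 1 := by
        have he : (1 + ((j+1:ℕ):ℝ)*μ*t^(N-1)) = (1+(j:ℝ)*u)*(1+y) := by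
          push_cast
          rw [mul_add, mul_one, hyU, hu_def]
          ring
        rw [hderiv, he, Real.mul_rpow hU0.le (by linarith : (0:ℝ) ≤ 1+y)]
        calc deriv R s * deriv (R^[j]) t * ((1+(j:ℝ)*u)^c * (1+y)^c)
            = (deriv R s * (1+y)^c) * (deriv (R^[j]) t * (1+(j:ℝ)*u)^c) := by ring
          _ ≤ 1 * 1 := by
              apply mul_le_mul hA hDj'
              · exact mul_nonneg hDj0 (Real.rpow_nonneg hU0.le c)
              · exact zero_le_one
          _ = 1 := one_mul 1
      exact ⟨⟨by rw [hit]; exact hnext0, by rw [hit]; exact hnextt⟩, hrecnext,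
        hdiffnext, hDnext0, hmain⟩
  -- conclusion
  obtain ⟨-, -, -, hD0, hDle⟩ := key j
  have hjm : (0:ℝ) ≤ (j:ℝ)*μ*t^(N-1) :=
    mul_nonneg (mul_nonneg (Nat.cast_nonneg j) hμpos.le) htN.le
  have hbase0 : (0:ℝ) < 1 + (j:ℝ)*μ*t^(N-1) := by linarith
  have hbase1 : (1:ℝ) ≤ 1 + (j:ℝ)*μ*t^(N-1) := by linarith
  have he_le : ν / μ * n / (n-1) ≤ c := by
    have h1 : ν * n / (n-1) ≤ ν' := le_of_lt hν'l
    have e1 : ν / μ * n / (n-1) = (ν * n / (n-1)) / μ := by ring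
    rw [e1, hc_def]
    exact (div_le_div_iff_of_pos_right hμpos).mpr h1
  have hrp : 0 < (1 + (j:ℝ)*μ*t^(N-1))^c := Real.rpow_pos_of_pos hbase0 c
  have h1 : deriv (R^[j]) t ≤ 1/(1 + (j:ℝ)*μ*t^(N-1))^c := by
    rw [le_div_iff₀ hrp]
    exact hDle
  have h2 : (1 + (j:ℝ)*μ*t^(N-1))^(ν / μ * n / (n-1)) ≤ (1 + (j:ℝ)*μ*t^(N-1))^c :=
    Real.rpow_le_rpow_of_exponent_le hbase1 he_le
  have h3 : 1/(1 + (j:ℝ)*μ*t^(N-1))^c ≤ 1/(1 + (j:ℝ)*μ*t^(N-1))^(ν / μ * n / (n-1)) :=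
    one_div_le_one_div_of_le (Real.rpow_pos_of_pos hbase0 _) h2
  exact h1.trans h3
end

section
/- Let Σ and DΣ be metric spaces with DΣ complete, and let Γ : Σ × DΣ → Σ × DΣ be a map of the form Γ(γ,φ) = (G(γ), H(γ,φ)). Assume: (a) G has an attracting fixed point γ∞ ∈ Σ, i.e. G(γ∞) = γ∞ and for every γ ∈ Σ the iterates Gⁿ(γ) converge to γ∞; (b) H is uniformly contractive in the second variable, i.e. there is λ ∈ [0,1) with d(H(γ,φ), H(γ,ψ)) ≤ λ·d(φ,ψ) for all γ ∈ Σ and all φ, ψ ∈ DΣ; let φ∞ ∈ DΣ be the unique fixed point of H(γ∞,·); and (c) the map γ ↦ H(γ,φ∞) is continuous at γ∞. Then (γ∞, φ∞) is an attracting fixed point of Γ: Γ(γ∞,φ∞) = (γ∞,φ∞) and for every (γ,φ) ∈ Σ × DΣ the iterates Γⁿ(γ,φ) converge to (γ∞,φ∞). -/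
open Filter

/-- If `d (n+1) ≤ lam * d n + ε n` with `ε → 0` and `0 ≤ lam < 1`, then `d → 0`. -/
lemma stmt_17_aux (d ε : ℕ → ℝ) (hd : ∀ n, 0 ≤ d n)
    (lam : ℝ) (hlam0 : 0 ≤ lam) (hlam1 : lam < 1)
    (hrec : ∀ n, d (n + 1) ≤ lam * d n + ε n)
    (hε : Tendsto ε atTop (nhds 0)) :
    Tendsto d atTop (nhds 0) := by
  rw [Metric.tendsto_atTop]
  intro δ hδ
  have hδ2 : 0 < (1 - lam) * (δ / 2) := mul_pos (by linarith) (by linarith)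
  obtain ⟨N, hN⟩ := (Metric.tendsto_atTop.1 hε) ((1 - lam) * (δ / 2)) hδ2
  have hNε : ∀ n ≥ N, ε n ≤ (1 - lam) * (δ / 2) := by
    intro n hn
    have := hN n hn
    rw [Real.dist_eq, sub_zero] at this
    exact (le_abs_self _).trans this.le
  have key : ∀ k, d (N + k) ≤ lam ^ k * d N + δ / 2 := by
    intro k
    induction k with
    | zero => simp; nlinarith [hd N]
    | succ k ih =>
      have h1 := hrec (N + k)
      have h2 := hNε (N + k) (Nat.le_add_right _ _)
      have : d (N + (k + 1)) = d (N + k + 1) := by ring_nf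
      rw [this]
      calc d (N + k + 1) ≤ lam * d (N + k) + ε (N + k) := h1
        _ ≤ lam * (lam ^ k * d N + δ / 2) + (1 - lam) * (δ / 2) := by
            have := mul_le_mul_of_nonneg_left ih hlam0
            linarith
        _ = lam ^ (k + 1) * d N + δ / 2 := by ring
  obtain ⟨K, hK⟩ := (Metric.tendsto_atTop.1
    (tendsto_pow_atTop_nhds_zero_of_lt_one hlam0 hlam1)) (δ / 2 / (d N + 1))
    (div_pos (by linarith) (by linarith [hd N]))
  refine ⟨N + K, fun n hn => ?_⟩
  obtain ⟨k, rfl⟩ := Nat.exists_eq_add_of_le (show N ≤ n by omega)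
  -- n = N + k with k ≥ K
  have hkK : K ≤ k := by omega
  have hpow : lam ^ k ≤ lam ^ K := pow_le_pow_of_le_one hlam0 hlam1.le hkK
  have hKval : lam ^ K < δ / 2 / (d N + 1) := by
    have := hK K le_rfl
    rw [Real.dist_eq, sub_zero] at this
    exact (le_abs_self _).trans_lt this
  have hdn : d (N + k) ≤ lam ^ k * d N + δ / 2 := key k
  rw [Real.dist_eq, sub_zero, abs_of_nonneg (hd _)]
  have h1 : lam ^ k * d N < δ / 2 := by
    calc lam ^ k * d N ≤ lam ^ K * d N :=
          mul_le_mul_of_nonneg_right hpow (hd N)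
      _ ≤ δ / 2 / (d N + 1) * d N := mul_le_mul_of_nonneg_right hKval.le (hd N)
      _ < δ / 2 := by
          rw [div_mul_eq_mul_div, div_lt_iff₀ (by linarith [hd N] : (0:ℝ) < d N + 1)]
          nlinarith [hd N, hδ]
  linarith

/-- The fiber contraction theorem: if `G` has an attracting fixed point `γ∞`,
`H` is uniformly contractive in the second variable with `φ∞` the fixed point
of `H(γ∞, ·)`, and `γ ↦ H(γ, φ∞)` is continuous at `γ∞`, then `(γ∞, φ∞)` is an
attracting fixed point of `Γ(γ, φ) = (G γ, H γ φ)`. -/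
theorem stmt_17
    {X Y : Type*} [MetricSpace X] [MetricSpace Y] [CompleteSpace Y]
    (G : X → X) (H : X → Y → Y)
    (Γ : X × Y → X × Y) (hΓ : ∀ p : X × Y, Γ p = (G p.1, H p.1 p.2))
    (γ₀ : X) (hGfix : G γ₀ = γ₀)
    (hGattr : ∀ γ : X, Tendsto (fun n => G^[n] γ) atTop (nhds γ₀))
    (lam : ℝ) (hlam0 : 0 ≤ lam) (hlam1 : lam < 1)
    (hcontr : ∀ (γ : X) (φ ψ : Y), dist (H γ φ) (H γ ψ) ≤ lam * dist φ ψ)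
    (φ₀ : Y) (hφfix : H γ₀ φ₀ = φ₀)
    (hcont : ContinuousAt (fun γ => H γ φ₀) γ₀) :
    Γ (γ₀, φ₀) = (γ₀, φ₀) ∧
    ∀ p : X × Y, Tendsto (fun n => Γ^[n] p) atTop (nhds (γ₀, φ₀)) := by
  constructor
  · rw [hΓ]; simp [hGfix, hφfix]
  intro p
  -- first component
  have hfst : ∀ n, (Γ^[n] p).1 = G^[n] p.1 := by
    intro n
    induction n with
    | zero => rfl
    | succ n ih =>
      rw [Function.iterate_succ_apply', Function.iterate_succ_apply', hΓ, ih]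
  have h1 : Tendsto (fun n => (Γ^[n] p).1) atTop (nhds γ₀) := by
    simpa only [hfst] using hGattr p.1
  -- error term
  set ε : ℕ → ℝ := fun n => dist (H (G^[n] p.1) φ₀) φ₀ with hε_def
  have hεt : Tendsto ε atTop (nhds 0) := by
    have h2 : Tendsto (fun n => H (G^[n] p.1) φ₀) atTop (nhds φ₀) := by
      have := hcont.tendsto.comp (hGattr p.1)
      rwa [hφfix] at this
    have := (tendsto_iff_dist_tendsto_zero).1 h2
    exact this
  -- second component distance
  set d : ℕ → ℝ := fun n => dist (Γ^[n] p).2 φ₀ with hd_def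
  have hrec : ∀ n, d (n + 1) ≤ lam * d n + ε n := by
    intro n
    have h3 : (Γ^[n+1] p).2 = H (G^[n] p.1) (Γ^[n] p).2 := by
      rw [Function.iterate_succ_apply', hΓ, hfst]
    simp only [hd_def, h3, hε_def]
    calc dist (H (G^[n] p.1) (Γ^[n] p).2) φ₀
        ≤ dist (H (G^[n] p.1) (Γ^[n] p).2) (H (G^[n] p.1) φ₀)
          + dist (H (G^[n] p.1) φ₀) φ₀ := dist_triangle _ _ _
      _ ≤ lam * dist (Γ^[n] p).2 φ₀ + dist (H (G^[n] p.1) φ₀) φ₀ := by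
          have := hcontr (G^[n] p.1) (Γ^[n] p).2 φ₀
          linarith
  have hdt : Tendsto d atTop (nhds 0) :=
    stmt_17_aux d ε (fun n => dist_nonneg) lam hlam0 hlam1 hrec hεt
  have h2 : Tendsto (fun n => (Γ^[n] p).2) atTop (nhds φ₀) :=
    tendsto_iff_dist_tendsto_zero.2 hdt
  have := h1.prodMk_nhds h2
  simpa using this
end

section
/- Let F be as in the context (analytic reduced form, case 1). Let K̂ = (K̂^x, K̂^y) : (−ρ,ρ) → ℝ² and R̂ : (−ρ,ρ) → ℝ be real-analytic maps with K̂^x(t) = t² + O(t³), K̂^y(t) = K̂¹·t^{k+1} + O(t^{k+2}) and R̂(t) = t + R̂_k·t^k + O(t^{k+1}). If F(K̂(t)) − K̂(R̂(t)) = (O(t^{k+2}), O(t^{2k+1})), then c·K̂¹ = 2·R̂_k and a_k = (k+1)·K̂¹·R̂_k; in particular (K̂¹)² = 2·a_k/(c·(k+1)) and R̂_k = (c/2)·K̂¹. -/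
open Set Filter

/-- `φ(t) = O(t^m)` for all sufficiently small `t > 0`. -/
def SmallO (φ : ℝ → ℝ) (m : ℕ) : Prop :=
  ∃ C > (0:ℝ), ∃ δ > (0:ℝ), ∀ t : ℝ, 0 < t → t < δ → |φ t| ≤ C * t ^ m

/-- `φ(x) = O(|x|^m)` as `x → 0`. -/
def SmallOabs (φ : ℝ → ℝ) (m : ℕ) : Prop :=
  ∃ C > (0:ℝ), ∃ δ > (0:ℝ), ∀ x : ℝ, |x| < δ → |φ x| ≤ C * |x| ^ m

lemma smallO_of_bound {φ : ℝ → ℝ} {m : ℕ} (C δ : ℝ) (hδ : 0 < δ)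
    (h : ∀ t : ℝ, 0 < t → t < δ → |φ t| ≤ C * t ^ m) : SmallO φ m := by
  refine ⟨max C 1, lt_of_lt_of_le one_pos (le_max_right _ _), δ, hδ, fun t ht htδ => ?_⟩
  exact (h t ht htδ).trans (mul_le_mul_of_nonneg_right (le_max_left _ _) (pow_nonneg ht.le m))

lemma SmallO.add {φ ψ : ℝ → ℝ} {m : ℕ} (hφ : SmallO φ m) (hψ : SmallO ψ m) :
    SmallO (fun t => φ t + ψ t) m := by
  obtain ⟨C₁, hC₁, δ₁, hδ₁, h₁⟩ := hφ
  obtain ⟨C₂, hC₂, δ₂, hδ₂, h₂⟩ := hψ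
  refine smallO_of_bound (C₁ + C₂) (min δ₁ δ₂) (lt_min hδ₁ hδ₂) (fun t ht htδ => ?_)
  have b₁ := h₁ t ht (lt_of_lt_of_le htδ (min_le_left _ _))
  have b₂ := h₂ t ht (lt_of_lt_of_le htδ (min_le_right _ _))
  calc |φ t + ψ t| ≤ |φ t| + |ψ t| := abs_add_le _ _
    _ ≤ C₁ * t ^ m + C₂ * t ^ m := add_le_add b₁ b₂
    _ = (C₁ + C₂) * t ^ m := by ring

lemma smallO_congr {φ ψ : ℝ → ℝ} {m : ℕ} (δ₀ : ℝ) (hδ₀ : 0 < δ₀)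
    (heq : ∀ t : ℝ, 0 < t → t < δ₀ → φ t = ψ t) (h : SmallO ψ m) : SmallO φ m := by
  obtain ⟨C, hC, δ, hδ, hb⟩ := h
  refine smallO_of_bound C (min δ δ₀) (lt_min hδ hδ₀) (fun t ht htδ => ?_)
  rw [heq t ht (lt_of_lt_of_le htδ (min_le_right _ _))]
  exact hb t ht (lt_of_lt_of_le htδ (min_le_left _ _))

lemma abs_le_linear_zero {A δ : ℝ} (C : ℝ) (hδ : 0 < δ)
    (h : ∀ t : ℝ, 0 < t → t < δ → |A| ≤ C * t) : A = 0 := by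
  by_contra hA
  have hA' : 0 < |A| := abs_pos.mpr hA
  set D := max C 1 with hD
  have hD0 : 0 < D := lt_of_lt_of_le one_pos (le_max_right _ _)
  set t := min (δ / 2) (|A| / (2 * D)) with htdef
  have ht : 0 < t := lt_min (by linarith) (by positivity)
  have htδ : t < δ := lt_of_le_of_lt (min_le_left _ _) (by linarith)
  have h1 : |A| ≤ C * t := h t ht htδ
  have h2 : C * t ≤ D * t := mul_le_mul_of_nonneg_right (le_max_left _ _) ht.le
  have h3 : D * t ≤ D * (|A| / (2 * D)) := mul_le_mul_of_nonneg_left (min_le_right _ _) hD0.le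
  have h4 : D * (|A| / (2 * D)) = |A| / 2 := by field_simp
  linarith

lemma coeff_eq_zero {A : ℝ} {n : ℕ} (h : SmallO (fun t => A * t ^ n) (n + 1)) : A = 0 := by
  obtain ⟨C, hC, δ, hδ, hb⟩ := h
  refine abs_le_linear_zero C hδ (fun t ht htδ => ?_)
  have hb' := hb t ht htδ
  have h1 : |A * t ^ n| = |A| * t ^ n := by
    rw [abs_mul, abs_pow, abs_of_pos ht]
  have h2 : C * t ^ (n + 1) = (C * t) * t ^ n := by ring
  rw [h1, h2] at hb'
  exact le_of_mul_le_mul_right hb' (pow_pos ht n)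

lemma abs_pow_sub_pow (a b M : ℝ) (ha : |a| ≤ M) (hb : |b| ≤ M) (n : ℕ) :
    |a ^ (n + 1) - b ^ (n + 1)| ≤ ((n : ℝ) + 1) * M ^ n * |a - b| := by
  have hM : 0 ≤ M := le_trans (abs_nonneg a) ha
  induction n with
  | zero => simp
  | succ n ih =>
    have key : a ^ (n + 2) - b ^ (n + 2) = a * (a ^ (n + 1) - b ^ (n + 1)) + (a - b) * b ^ (n + 1) := by
      ring
    calc |a ^ (n + 2) - b ^ (n + 2)|
        ≤ |a * (a ^ (n + 1) - b ^ (n + 1))| + |(a - b) * b ^ (n + 1)| := by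
          rw [key]; exact abs_add_le _ _
      _ = |a| * |a ^ (n + 1) - b ^ (n + 1)| + |a - b| * |b| ^ (n + 1) := by
          rw [abs_mul, abs_mul, abs_pow]
      _ ≤ M * (((n : ℝ) + 1) * M ^ n * |a - b|) + |a - b| * M ^ (n + 1) := by
          have h1 : |a| * |a ^ (n + 1) - b ^ (n + 1)| ≤ M * (((n : ℝ) + 1) * M ^ n * |a - b|) := by
            apply mul_le_mul ha ih (abs_nonneg _) hM
          have h2 : |b| ^ (n + 1) ≤ M ^ (n + 1) := pow_le_pow_left₀ (abs_nonneg b) hb _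
          have h3 : |a - b| * |b| ^ (n + 1) ≤ |a - b| * M ^ (n + 1) :=
            mul_le_mul_of_nonneg_left h2 (abs_nonneg _)
          linarith
      _ = ((((n:ℕ) + 1 : ℕ) : ℝ) + 1) * M ^ (n + 1) * |a - b| := by push_cast; ring

lemma taylor2 (a b M : ℝ) (ha : |a| ≤ M) (hb : |b| ≤ M) (n : ℕ) :
    |a ^ (n + 2) - b ^ (n + 2) - ((n : ℝ) + 2) * b ^ (n + 1) * (a - b)|
      ≤ ((n : ℝ) + 2) ^ 2 * M ^ n * (a - b) ^ 2 := by
  have hM : 0 ≤ M := le_trans (abs_nonneg a) ha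
  induction n with
  | zero =>
    have e : a ^ (0+2) - b ^ (0+2) - ((0:ℕ) + 2 : ℝ) * b ^ (0+1) * (a - b) = (a - b) ^ 2 := by
      push_cast; ring
    rw [e, abs_of_nonneg (sq_nonneg _)]
    simp only [pow_zero, mul_one, Nat.cast_zero]
    nlinarith [sq_nonneg (a - b)]
  | succ n ih =>
    have key : a ^ (n + 3) - b ^ (n + 3) - ((n : ℝ) + 3) * b ^ (n + 2) * (a - b)
        = a * (a ^ (n + 2) - b ^ (n + 2) - ((n : ℝ) + 2) * b ^ (n + 1) * (a - b))
          + ((n : ℝ) + 2) * b ^ (n + 1) * (a - b) ^ 2 := by ring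
    have hbp : |b| ^ (n + 1) ≤ M ^ (n + 1) := pow_le_pow_left₀ (abs_nonneg b) hb _
    have hMp : (0:ℝ) ≤ M ^ n := pow_nonneg hM n
    have habs : |a ^ (n + 3) - b ^ (n + 3) - ((n : ℝ) + 3) * b ^ (n + 2) * (a - b)|
        ≤ M * (((n : ℝ) + 2) ^ 2 * M ^ n * (a - b) ^ 2) + ((n : ℝ) + 2) * M ^ (n + 1) * (a - b) ^ 2 := by
      rw [key]
      calc |_ + _| ≤ |a * (a ^ (n + 2) - b ^ (n + 2) - ((n : ℝ) + 2) * b ^ (n + 1) * (a - b))|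
            + |((n : ℝ) + 2) * b ^ (n + 1) * (a - b) ^ 2| := abs_add_le _ _
        _ ≤ M * (((n : ℝ) + 2) ^ 2 * M ^ n * (a - b) ^ 2) + ((n : ℝ) + 2) * M ^ (n + 1) * (a - b) ^ 2 := by
            have h1 : |a * (a ^ (n + 2) - b ^ (n + 2) - ((n : ℝ) + 2) * b ^ (n + 1) * (a - b))|
                ≤ M * (((n : ℝ) + 2) ^ 2 * M ^ n * (a - b) ^ 2) := by
              rw [abs_mul]
              exact mul_le_mul ha ih (abs_nonneg _) hM
            have h2 : |((n : ℝ) + 2) * b ^ (n + 1) * (a - b) ^ 2|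
                ≤ ((n : ℝ) + 2) * M ^ (n + 1) * (a - b) ^ 2 := by
              rw [abs_mul, abs_mul, abs_pow, abs_of_nonneg (sq_nonneg (a-b))]
              rw [abs_of_nonneg (by positivity : (0:ℝ) ≤ (n:ℝ) + 2)]
              apply mul_le_mul_of_nonneg_right _ (sq_nonneg _)
              exact mul_le_mul_of_nonneg_left hbp (by positivity)
            linarith
    have hfin : M * (((n : ℝ) + 2) ^ 2 * M ^ n * (a - b) ^ 2)
          + ((n : ℝ) + 2) * M ^ (n + 1) * (a - b) ^ 2
        ≤ ((n : ℝ) + 3) ^ 2 * M ^ (n + 1) * (a - b) ^ 2 := by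
      have e1 : M * (((n : ℝ) + 2) ^ 2 * M ^ n * (a - b) ^ 2) = ((n : ℝ) + 2) ^ 2 * M ^ (n+1) * (a - b) ^ 2 := by
        ring
      rw [e1]
      have : ((n : ℝ) + 2) ^ 2 + ((n : ℝ) + 2) ≤ ((n : ℝ) + 3) ^ 2 := by nlinarith [Nat.cast_nonneg (α := ℝ) n]
      nlinarith [pow_nonneg hM (n+1), sq_nonneg (a - b), mul_nonneg (pow_nonneg hM (n+1)) (sq_nonneg (a-b))]
    have e1 : ((((n:ℕ)+1 : ℕ)):ℝ) + 2 = (n:ℝ) + 3 := by push_cast; ring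
    have e2 : n + 1 + 2 = n + 3 := rfl
    have e3 : n + 1 + 1 = n + 2 := rfl
    rw [e1, e2, e3]
    have e4 : ((n:ℝ) + 3) ^ 2 * M ^ (n+1) * (a-b)^2 = ((n:ℝ) + 3) ^ 2 * M ^ (n + 1) * (a - b) ^ 2 := rfl
    exact le_trans habs hfin

lemma eventually_nhds_zero {P : ℝ → Prop} (h : ∀ᶠ t in nhds (0:ℝ), P t) :
    ∃ ε > (0:ℝ), ∀ t : ℝ, |t| < ε → P t := by
  rw [Metric.eventually_nhds_iff] at h
  obtain ⟨ε, hε, h⟩ := h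
  exact ⟨ε, hε, fun t ht => h (by simpa [Real.dist_eq] using ht)⟩

lemma val_zero_of_bound {w : ℝ → ℝ} (hw : ContinuousAt w 0) (C δ : ℝ) (hδ : 0 < δ)
    (h : ∀ t : ℝ, 0 < t → t < δ → |w t| ≤ C * t) : w 0 = 0 := by
  have h1 : Tendsto w (nhdsWithin (0:ℝ) (Ioi 0)) (nhds (w 0)) :=
    hw.continuousWithinAt.tendsto
  have hev : ∀ᶠ t in nhdsWithin (0:ℝ) (Ioi 0), |w t| ≤ C * t := by
    filter_upwards [Ioo_mem_nhdsGT_of_mem (Set.mem_Ico.mpr ⟨le_refl (0:ℝ), hδ⟩)] with t ht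
    exact h t ht.1 ht.2
  have h2 : Tendsto (fun t : ℝ => C * t) (nhdsWithin (0:ℝ) (Ioi 0)) (nhds 0) := by
    have : Tendsto (fun t : ℝ => C * t) (nhds (0:ℝ)) (nhds (C * 0)) :=
      (continuous_const.mul continuous_id).tendsto 0
    simpa using this.mono_left nhdsWithin_le_nhds
  have h3 : Tendsto w (nhdsWithin (0:ℝ) (Ioi 0)) (nhds 0) :=
    squeeze_zero_norm' (by simpa [Real.norm_eq_abs] using hev) h2
  exact tendsto_nhds_unique h1 h3

lemma bounded_near {w : ℝ → ℝ} (hw : ContinuousAt w 0) :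
    ∃ M > (0:ℝ), ∃ ε > (0:ℝ), ∀ t : ℝ, |t| < ε → |w t| ≤ M := by
  have h : ∀ᶠ t in nhds (0:ℝ), |w t - w 0| < 1 := by
    have := Metric.tendsto_nhds.mp hw.tendsto 1 one_pos
    simpa [Real.dist_eq] using this
  obtain ⟨ε, hε, h⟩ := eventually_nhds_zero h
  refine ⟨|w 0| + 1, by positivity, ε, hε, fun t ht => ?_⟩
  have := h t ht
  have := abs_sub_abs_le_abs_sub (w t) (w 0)
  linarith

lemma lipschitz_near {w : ℝ → ℝ} (hw : AnalyticAt ℝ w 0) :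
    ∃ L ≥ (0:ℝ), ∃ ε > (0:ℝ), ∀ x y : ℝ, |x| < ε → |y| < ε → |w x - w y| ≤ L * |x - y| := by
  obtain ⟨K, s, hs, hl⟩ := (hw.contDiffAt (n := 1)).exists_lipschitzOnWith
  obtain ⟨ε, hε, hball⟩ := Metric.mem_nhds_iff.mp hs
  refine ⟨K, K.coe_nonneg, ε, hε, fun x y hx hy => ?_⟩
  have hx' : x ∈ s := hball (by simpa [Real.dist_eq, Metric.mem_ball] using hx)
  have hy' : y ∈ s := hball (by simpa [Real.dist_eq, Metric.mem_ball] using hy)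
  have := hl.dist_le_mul x hx' y hy'
  simpa [Real.dist_eq] using this

lemma factor_out {g : ℝ → ℝ} (hg : AnalyticAt ℝ g 0) {m : ℕ} (ho : SmallO g m) :
    ∃ u : ℝ → ℝ, AnalyticAt ℝ u 0 ∧ ∀ᶠ t in nhds (0:ℝ), g t = t ^ m * u t := by
  by_cases htop : analyticOrderAt g 0 = ⊤
  · refine ⟨fun _ => 0, analyticAt_const, ?_⟩
    filter_upwards [analyticOrderAt_eq_top.mp htop] with z hz
    simp [hz]
  · obtain ⟨n, hn⟩ := WithTop.ne_top_iff_exists.mp htop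
    replace hn := hn.symm
    obtain ⟨w, hw_an, hw0, hw_ev⟩ := hg.analyticOrderAt_eq_natCast.mp hn
    have hw_ev' : ∀ᶠ z in nhds (0:ℝ), g z = z ^ n * w z := by
      filter_upwards [hw_ev] with z hz
      simpa [smul_eq_mul] using hz
    have hmn : m ≤ n := by
      by_contra hc
      push_neg at hc
      apply hw0
      obtain ⟨C, hC, δ, hδ, hb⟩ := ho
      obtain ⟨ε, hε, hev⟩ := eventually_nhds_zero hw_ev'
      refine val_zero_of_bound hw_an.continuousAt C (min (min δ ε) 1) (by positivity) ?_
      intro t ht htδ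
      have ht1 : t < 1 := lt_of_lt_of_le htδ (le_trans (min_le_right _ _) (le_refl _))
      have htδ' : t < δ := lt_of_lt_of_le htδ (le_trans (min_le_left _ _) (min_le_left _ _))
      have htε : t < ε := lt_of_lt_of_le htδ (le_trans (min_le_left _ _) (min_le_right _ _))
      have heq := hev t (by rw [abs_of_pos ht]; exact htε)
      have hb' := hb t ht htδ'
      rw [heq, abs_mul, abs_pow, abs_of_pos ht] at hb'
      have htn : (0:ℝ) < t ^ n := pow_pos ht n
      -- C * t ^ m ≤ C * t * t ^ n since t ^ m = t^(m - n - 1) * t * t^n and t ≤ 1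
      have hm : n + 1 ≤ m := hc
      have hpow : t ^ m ≤ t * t ^ n := by
        calc t ^ m ≤ t ^ (n + 1) := pow_le_pow_of_le_one ht.le ht1.le hm
          _ = t * t ^ n := by ring
      have : t ^ n * |w t| ≤ C * (t * t ^ n) :=
        le_trans hb' (by
          have := mul_le_mul_of_nonneg_left hpow hC.le
          linarith)
      have : |w t| * t ^ n ≤ (C * t) * t ^ n := by nlinarith
      exact le_of_mul_le_mul_right this htn
    refine ⟨fun z => z ^ (n - m) * w z, (analyticAt_id.pow _).mul hw_an, ?_⟩
    filter_upwards [hw_ev'] with z hz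
    rw [hz, ← mul_assoc, ← pow_add]
    congr 2
    omega
set_option maxHeartbeats 4000000 in
/-- Remark 2.2 (case 1): the order conditions on the approximate invariance
equation force the relations `c K̂¹ = 2 R̂_k` and `a_k = (k+1) K̂¹ R̂_k`, hence
`(K̂¹)² = 2 a_k / (c (k+1))` and `R̂_k = (c/2) K̂¹`. -/
theorem stmt_18
    (U : Set (ℝ × ℝ)) (hU : U ∈ nhds (0 : ℝ × ℝ))
    (F : ℝ × ℝ → ℝ × ℝ) (c : ℝ) (hc : 0 < c)
    (f : ℝ × ℝ → ℝ) (hfan : AnalyticOnNhd ℝ f U)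
    (hf0 : f 0 = 0) (hDf : fderiv ℝ f 0 = 0)
    (hFform : ∀ z ∈ U, F z = (z.1 + c * z.2, z.2 + f z))
    (p q : ℝ → ℝ) (h : ℝ × ℝ → ℝ)
    (hpan : AnalyticAt ℝ p 0) (hqan : AnalyticAt ℝ q 0) (hhan : AnalyticAt ℝ h 0)
    (hdecomp : ∀ z ∈ U, f z = p z.1 + z.2 * q z.1 + z.2 ^ 2 * h z)
    (k l : ℕ) (hk : 2 ≤ k) (hl : 2 ≤ l) (hkl : k < 2 * l - 1)
    (a : ℝ) (ha : a ≠ 0)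
    (hp : SmallOabs (fun x => p x - a * x ^ k) (k + 1))
    (hq : SmallOabs q (l - 1))
    (ρ : ℝ) (hρ : 0 < ρ)
    (Khat : ℝ → ℝ × ℝ) (Rhat : ℝ → ℝ)
    (hKhatan : AnalyticOnNhd ℝ Khat (Ioo (-ρ) ρ))
    (hRhatan : AnalyticOnNhd ℝ Rhat (Ioo (-ρ) ρ))
    (K1 Rk : ℝ)
    (hKx : SmallO (fun t => (Khat t).1 - t ^ 2) 3)
    (hKy : SmallO (fun t => (Khat t).2 - K1 * t ^ (k + 1)) (k + 2))
    (hR : SmallO (fun t => Rhat t - (t + Rk * t ^ k)) (k + 1))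
    (herrx : SmallO (fun t => (F (Khat t)).1 - (Khat (Rhat t)).1) (k + 2))
    (herry : SmallO (fun t => (F (Khat t)).2 - (Khat (Rhat t)).2) (2 * k + 1)) :
    c * K1 = 2 * Rk ∧ a = ((k:ℝ) + 1) * K1 * Rk ∧
    K1 ^ 2 = 2 * a / (c * ((k:ℝ) + 1)) ∧ Rk = c / 2 * K1 := by
  obtain ⟨κ, rfl⟩ : ∃ κ, k = κ + 2 := ⟨k - 2, by omega⟩
  obtain ⟨ν, rfl⟩ : ∃ ν, l = ν + 2 := ⟨l - 2, by omega⟩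
  have hκν : κ ≤ 2 * ν := by omega
  simp only [show κ + 2 + 1 = κ + 3 by omega, show κ + 2 + 2 = κ + 4 by omega,
    show 2 * (κ + 2) + 1 = 2 * κ + 5 by omega, show ν + 2 - 1 = ν + 1 by omega] at hKy hR herrx herry hp hq
  -- analyticity at 0
  have h0mem : (0:ℝ) ∈ Ioo (-ρ) ρ := ⟨by linarith, hρ⟩
  have hKan : AnalyticAt ℝ Khat 0 := hKhatan 0 h0mem
  have hRan : AnalyticAt ℝ Rhat 0 := hRhatan 0 h0mem
  have hKx_an : AnalyticAt ℝ (fun t => (Khat t).1) 0 :=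
    ((ContinuousLinearMap.fst ℝ ℝ ℝ).analyticAt (Khat 0)).comp hKan
  have hKy_an : AnalyticAt ℝ (fun t => (Khat t).2) 0 :=
    ((ContinuousLinearMap.snd ℝ ℝ ℝ).analyticAt (Khat 0)).comp hKan
  -- factorizations
  obtain ⟨u₁, hu₁an, hu₁ev⟩ := factor_out (hKx_an.sub (analyticAt_id.pow 2)) hKx
  obtain ⟨u₂, hu₂an, hu₂ev⟩ :=
    factor_out (hKy_an.sub (analyticAt_const.mul (analyticAt_id.pow (κ+3)))) hKy
  obtain ⟨u₃, hu₃an, hu₃ev⟩ :=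
    factor_out (hRan.sub (analyticAt_id.add (analyticAt_const.mul (analyticAt_id.pow (κ+2))))) hR
  simp only [Pi.sub_apply, Pi.add_apply, Pi.mul_apply, Pi.pow_apply, id_eq] at hu₁ev hu₂ev hu₃ev
  obtain ⟨ε₁, hε₁, hev₁⟩ := eventually_nhds_zero hu₁ev
  obtain ⟨ε₂, hε₂, hev₂⟩ := eventually_nhds_zero hu₂ev
  obtain ⟨ε₃, hε₃, hev₃⟩ := eventually_nhds_zero hu₃ev
  have hev₁' : ∀ t : ℝ, |t| < ε₁ → (Khat t).1 = t^2 + t^3 * u₁ t := by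
    intro t ht; have := hev₁ t ht; linarith
  have hev₂' : ∀ t : ℝ, |t| < ε₂ → (Khat t).2 = K1 * t^(κ+3) + t^(κ+4) * u₂ t := by
    intro t ht; have := hev₂ t ht; linarith
  have hev₃' : ∀ t : ℝ, |t| < ε₃ → Rhat t = t + Rk * t^(κ+2) + t^(κ+3) * u₃ t := by
    intro t ht; have := hev₃ t ht; linarith
  -- bounds
  obtain ⟨M₁, hM₁, β₁, hβ₁, hMb₁⟩ := bounded_near hu₁an.continuousAt
  obtain ⟨M₂, hM₂, β₂, hβ₂, hMb₂⟩ := bounded_near hu₂an.continuousAt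
  obtain ⟨M₃, hM₃, β₃, hβ₃, hMb₃⟩ := bounded_near hu₃an.continuousAt
  obtain ⟨L₁, hL₁, γ₁, hγ₁, hLb₁⟩ := lipschitz_near hu₁an
  obtain ⟨L₂, hL₂, γ₂, hγ₂, hLb₂⟩ := lipschitz_near hu₂an
  -- value at 0
  have hKx0 : (Khat 0).1 = 0 := by
    obtain ⟨C, hC, δ, hδ, hb⟩ := hKx
    refine val_zero_of_bound hKx_an.continuousAt (C + 1) (min δ 1) (by positivity) ?_
    intro t ht htδ
    simp only [lt_min_iff] at htδ
    have hb' := hb t ht htδ.1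
    have h1 : |(Khat t).1| ≤ |(Khat t).1 - t^2| + t^2 := by
      have := abs_sub_abs_le_abs_sub ((Khat t).1) (t^2)
      have h2 : |t^2| = t^2 := abs_of_nonneg (sq_nonneg t)
      calc |(Khat t).1| = |(Khat t).1 - t^2 + t^2| := by congr 1; ring
        _ ≤ |(Khat t).1 - t^2| + |t^2| := abs_add_le _ _
        _ = |(Khat t).1 - t^2| + t^2 := by rw [h2]
    have h3 : t^3 ≤ t := by nlinarith [htδ.2, ht]
    have h4 : t^2 ≤ t := by nlinarith [htδ.2, ht]
    calc |(Khat t).1| ≤ C * t^3 + t^2 := by linarith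
      _ ≤ C * t + t := by nlinarith
      _ = (C + 1) * t := by ring
  have hKy0 : (Khat 0).2 = 0 := by
    obtain ⟨C, hC, δ, hδ, hb⟩ := hKy
    refine val_zero_of_bound hKy_an.continuousAt (C + |K1| + 1) (min δ 1) (by positivity) ?_
    intro t ht htδ
    simp only [lt_min_iff] at htδ
    have hb' := hb t ht htδ.1
    have ht1 : t ≤ 1 := htδ.2.le
    have hps : t ^ (κ+4) ≤ t := by
      calc t ^ (κ+4) ≤ t ^ 1 := pow_le_pow_of_le_one ht.le ht1 (by omega)
        _ = t := pow_one t
    have hps3 : t ^ (κ+3) ≤ t := by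
      calc t ^ (κ+3) ≤ t ^ 1 := pow_le_pow_of_le_one ht.le ht1 (by omega)
        _ = t := pow_one t
    have h1 : |(Khat t).2| ≤ |(Khat t).2 - K1 * t^(κ+3)| + |K1| * t^(κ+3) := by
      calc |(Khat t).2| = |(Khat t).2 - K1 * t^(κ+3) + K1 * t^(κ+3)| := by congr 1; ring
        _ ≤ |(Khat t).2 - K1 * t^(κ+3)| + |K1 * t^(κ+3)| := abs_add_le _ _
        _ = |(Khat t).2 - K1 * t^(κ+3)| + |K1| * t^(κ+3) := by
            rw [abs_mul, abs_of_nonneg (pow_nonneg ht.le _)]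
    calc |(Khat t).2| ≤ C * t^(κ+4) + |K1| * t^(κ+3) := by linarith
      _ ≤ C * t + |K1| * t + t := by nlinarith [abs_nonneg K1]
      _ = (C + |K1| + 1) * t := by ring
  have hK0 : Khat 0 = 0 := by
    have : Khat 0 = ((Khat 0).1, (Khat 0).2) := rfl
    rw [this, hKx0, hKy0]; rfl
  -- membership in U eventually
  have hUev : ∀ᶠ t in nhds (0:ℝ), Khat t ∈ U := by
    have : Khat ⁻¹' U ∈ nhds (0:ℝ) := hKan.continuousAt.preimage_mem_nhds (by rwa [hK0])
    exact this
  obtain ⟨εU, hεU, hmemU⟩ := eventually_nhds_zero hUev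
  -- h ∘ Khat bounded near 0
  have hhcont : ContinuousAt (fun t : ℝ => h (Khat t)) 0 := by
    have h1 : ContinuousAt h (Khat 0) := by rw [hK0]; exact hhan.continuousAt
    exact h1.comp hKan.continuousAt
  obtain ⟨Mh, hMh, εh, hεh, hMbh⟩ := bounded_near hhcont
  -- constants
  obtain ⟨Cp, hCp, δp, hδp, hbp⟩ := hp
  obtain ⟨Cq, hCq, δq, hδq, hbq⟩ := hq
  set Cs : ℝ := |Rk| + M₃ with hCsdef
  have hCs : 0 < Cs := by have := abs_nonneg Rk; simp only [hCsdef]; linarith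
  -- the deviation bound
  set δs : ℝ := min ε₃ (min β₃ (min 1 (1/Cs))) with hδsdef
  have hδs : 0 < δs := by
    simp only [hδsdef, lt_min_iff]
    refine ⟨hε₃, hβ₃, one_pos, by positivity⟩
  have hsb : ∀ t : ℝ, 0 < t → t < δs → |Rhat t - t| ≤ Cs * t^(κ+2) ∧ |Rhat t| ≤ 2*t := by
    intro t ht htδ
    simp only [hδsdef, lt_min_iff] at htδ
    obtain ⟨h3, hb3, h1t, hCst⟩ := htδ
    have ht1 : t ≤ 1 := h1t.le
    have habs : |t| < ε₃ := by rw [abs_of_pos ht]; exact h3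
    have heq : Rhat t - t = Rk * t^(κ+2) + t^(κ+3) * u₃ t := by
      have := hev₃' t habs
      linarith
    have hu3 : |u₃ t| ≤ M₃ := hMb₃ t (by rw [abs_of_pos ht]; exact hb3)
    have hpow : t^(κ+3) ≤ t^(κ+2) := pow_le_pow_of_le_one ht.le ht1 (by omega)
    have hs1 : |Rhat t - t| ≤ Cs * t^(κ+2) := by
      rw [heq]
      calc |Rk * t^(κ+2) + t^(κ+3) * u₃ t| ≤ |Rk * t^(κ+2)| + |t^(κ+3) * u₃ t| := abs_add_le _ _
        _ = |Rk| * t^(κ+2) + t^(κ+3) * |u₃ t| := by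
            rw [abs_mul, abs_mul, abs_of_nonneg (pow_nonneg ht.le _),
              abs_of_nonneg (pow_nonneg ht.le _)]
        _ ≤ |Rk| * t^(κ+2) + t^(κ+2) * M₃ := by
            have h0 : (0:ℝ) ≤ t^(κ+3) := pow_nonneg ht.le _
            have h0' : (0:ℝ) ≤ t^(κ+2) := pow_nonneg ht.le _
            nlinarith
        _ = Cs * t^(κ+2) := by rw [hCsdef]; ring
    refine ⟨hs1, ?_⟩
    have hp2 : t^(κ+2) ≤ t^2 := pow_le_pow_of_le_one ht.le ht1 (by omega)
    have hCt : Cs * t ≤ 1 := by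
      have := (lt_div_iff₀ hCs).mp hCst
      nlinarith
    have h2 : |Rhat t - t| ≤ t := by
      calc |Rhat t - t| ≤ Cs * t^(κ+2) := hs1
        _ ≤ Cs * t^2 := mul_le_mul_of_nonneg_left hp2 hCs.le
        _ = (Cs * t) * t := by ring
        _ ≤ 1 * t := mul_le_mul_of_nonneg_right hCt ht.le
        _ = t := one_mul t
    calc |Rhat t| = |Rhat t - t + t| := by congr 1; ring
      _ ≤ |Rhat t - t| + |t| := abs_add_le _ _
      _ = |Rhat t - t| + t := by rw [abs_of_pos ht]
      _ ≤ 2 * t := by linarith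
  -- ===== x equation =====
  have hpow_le : ∀ (t : ℝ), 0 < t → t ≤ 1 → ∀ m n : ℕ, m ≤ n → t^n ≤ t^m :=
    fun t ht ht1 m n hmn => pow_le_pow_of_le_one ht.le ht1 hmn
  set δx : ℝ := min εU (min ε₁ (min ε₂ (min ε₃ (min δs (ε₁/2))))) with hδxdef
  have hδx : 0 < δx := by
    simp only [hδxdef, lt_min_iff]
    exact ⟨hεU, hε₁, hε₂, hε₃, hδs, by positivity⟩
  have keyx : ∀ t : ℝ, 0 < t → t < δx →
      (c*K1 - 2*Rk) * t^(κ+3) =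
        ((F (Khat t)).1 - (Khat (Rhat t)).1)
        + (Rhat t - t)^2
        + (2*t^(κ+4)*u₃ t - c*t^(κ+4)*u₂ t)
        + ((Rhat t)^3 - t^3) * u₁ (Rhat t)
        + t^3 * (u₁ (Rhat t) - u₁ t) := by
    intro t ht htδ
    simp only [hδxdef, lt_min_iff] at htδ
    obtain ⟨hU', h1', h2', h3', hs', h12'⟩ := htδ
    have habs : |t| = t := abs_of_pos ht
    have hR2 : |Rhat t| ≤ 2*t := (hsb t ht hs').2
    have hRε₁ : |Rhat t| < ε₁ := by linarith
    have e5 : (F (Khat t)).1 = (Khat t).1 + c * (Khat t).2 := by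
      rw [hFform (Khat t) (hmemU t (by rw [habs]; exact hU'))]
    have e4 : (Khat (Rhat t)).1 = (Rhat t)^2 + (Rhat t)^3 * u₁ (Rhat t) := hev₁' (Rhat t) hRε₁
    have e1 := hev₁' t (by rw [habs]; exact h1')
    have e2 := hev₂' t (by rw [habs]; exact h2')
    have e3 := hev₃' t (by rw [habs]; exact h3')
    rw [e5, e4, e1, e2, e3]
    ring
  have S2 : SmallO (fun t => (Rhat t - t)^2) (κ+4) := by
    refine smallO_of_bound (Cs^2) (min δs 1) (lt_min hδs one_pos) ?_
    intro t ht htδ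
    simp only [lt_min_iff] at htδ
    obtain ⟨hs', h1'⟩ := htδ
    have hb := (hsb t ht hs').1
    have hple := hpow_le t ht h1'.le (κ+4) (2*κ+4) (by omega)
    calc |(Rhat t - t)^2| = |Rhat t - t|^2 := by rw [abs_pow]
      _ ≤ (Cs * t^(κ+2))^2 := pow_le_pow_left₀ (abs_nonneg _) hb 2
      _ = Cs^2 * t^(2*κ+4) := by rw [mul_pow, ← pow_mul]; ring_nf
      _ ≤ Cs^2 * t^(κ+4) := mul_le_mul_of_nonneg_left hple (by positivity)
  have S3 : SmallO (fun t => 2*t^(κ+4)*u₃ t - c*t^(κ+4)*u₂ t) (κ+4) := by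
    refine smallO_of_bound (2*M₃ + c*M₂) (min β₃ β₂) (lt_min hβ₃ hβ₂) ?_
    intro t ht htδ
    simp only [lt_min_iff] at htδ
    obtain ⟨hb3, hb2⟩ := htδ
    have habs : |t| = t := abs_of_pos ht
    have h3 := hMb₃ t (by rw [habs]; exact hb3)
    have h2 := hMb₂ t (by rw [habs]; exact hb2)
    have htp : (0:ℝ) ≤ t^(κ+4) := pow_nonneg ht.le _
    calc |2*t^(κ+4)*u₃ t - c*t^(κ+4)*u₂ t|
        ≤ |2*t^(κ+4)*u₃ t| + |c*t^(κ+4)*u₂ t| := abs_sub _ _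
      _ = 2*t^(κ+4)*|u₃ t| + c*t^(κ+4)*|u₂ t| := by
          rw [abs_mul, abs_mul, abs_mul, abs_mul]
          rw [abs_of_nonneg htp, abs_of_nonneg (by norm_num : (0:ℝ) ≤ 2), abs_of_pos hc]
      _ ≤ 2*t^(κ+4)*M₃ + c*t^(κ+4)*M₂ := by
          have i1 := mul_le_mul_of_nonneg_left h3 (by positivity : (0:ℝ) ≤ 2*t^(κ+4))
          have i2 := mul_le_mul_of_nonneg_left h2 (by positivity : (0:ℝ) ≤ c*t^(κ+4))
          linarith
      _ = (2*M₃ + c*M₂) * t^(κ+4) := by ring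
  have S4 : SmallO (fun t => ((Rhat t)^3 - t^3) * u₁ (Rhat t)) (κ+4) := by
    refine smallO_of_bound (12*Cs*M₁) (min δs (β₁/2)) (lt_min hδs (by positivity)) ?_
    intro t ht htδ
    simp only [lt_min_iff] at htδ
    obtain ⟨hs', hb1⟩ := htδ
    obtain ⟨hsb1, hsb2⟩ := hsb t ht hs'
    have hu1 : |u₁ (Rhat t)| ≤ M₁ := hMb₁ (Rhat t) (by linarith)
    have ht2 : |t| ≤ 2*t := by rw [abs_of_pos ht]; linarith
    have hps := abs_pow_sub_pow (Rhat t) t (2*t) hsb2 ht2 2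
    have h3 : ((2:ℕ):ℝ) + 1 = 3 := by norm_num
    rw [h3] at hps
    have hcalc : 3 * (2*t)^2 * |Rhat t - t| ≤ 12 * Cs * t^(κ+4) := by
      have h4 : (3:ℝ) * (2*t)^2 = 12 * t^2 := by ring
      rw [h4]
      calc 12 * t^2 * |Rhat t - t| ≤ 12 * t^2 * (Cs * t^(κ+2)) := by
            apply mul_le_mul_of_nonneg_left hsb1 (by positivity)
        _ = 12 * Cs * t^(κ+4) := by rw [show κ+4 = 2+(κ+2) from by omega, pow_add]; ring
    calc |((Rhat t)^3 - t^3) * u₁ (Rhat t)| = |(Rhat t)^3 - t^3| * |u₁ (Rhat t)| := abs_mul _ _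
      _ ≤ (3 * (2*t)^2 * |Rhat t - t|) * M₁ := by
          apply mul_le_mul hps hu1 (abs_nonneg _) (by positivity)
      _ ≤ (12 * Cs * t^(κ+4)) * M₁ := mul_le_mul_of_nonneg_right hcalc hM₁.le
      _ = 12*Cs*M₁ * t^(κ+4) := by ring
  have S5 : SmallO (fun t => t^3 * (u₁ (Rhat t) - u₁ t)) (κ+4) := by
    refine smallO_of_bound (L₁*Cs) (min δs (min (γ₁/2) 1)) (lt_min hδs (lt_min (by positivity) one_pos)) ?_
    intro t ht htδ
    simp only [lt_min_iff] at htδ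
    obtain ⟨hs', hg1, h1'⟩ := htδ
    obtain ⟨hsb1, hsb2⟩ := hsb t ht hs'
    have hlip := hLb₁ (Rhat t) t (by linarith) (by rw [abs_of_pos ht]; linarith)
    have htp : (0:ℝ) ≤ t^3 := by positivity
    calc |t^3 * (u₁ (Rhat t) - u₁ t)| = t^3 * |u₁ (Rhat t) - u₁ t| := by
          rw [abs_mul, abs_of_nonneg htp]
      _ ≤ t^3 * (L₁ * |Rhat t - t|) := mul_le_mul_of_nonneg_left hlip htp
      _ ≤ t^3 * (L₁ * (Cs * t^(κ+2))) := by
          apply mul_le_mul_of_nonneg_left _ htp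
          exact mul_le_mul_of_nonneg_left hsb1 hL₁
      _ = (L₁*Cs) * t^(κ+5) := by rw [show κ+5 = 3+(κ+2) from by omega, pow_add]; ring
      _ ≤ (L₁*Cs) * t^(κ+4) := by
          apply mul_le_mul_of_nonneg_left (hpow_le t ht h1'.le (κ+4) (κ+5) (by omega))
          positivity
  have Sx : SmallO (fun t => (c*K1 - 2*Rk) * t^(κ+3)) (κ+4) :=
    smallO_congr δx hδx keyx ((((herrx.add S2).add S3).add S4).add S5)
  have hxeq : c*K1 - 2*Rk = 0 := coeff_eq_zero Sx
  -- ===== y equation =====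
  obtain ⟨w, hw⟩ : ∃ w : ℝ → ℝ, ∀ r, w r = 1 + r * u₁ r := ⟨fun r => 1 + r*u₁ r, fun r => rfl⟩
  set Cy : ℝ := |K1| + M₂ with hCydef
  have hCy : 0 < Cy := by have := abs_nonneg K1; simp only [hCydef]; linarith
  have hwb : ∀ t : ℝ, 0 < t → t < min β₁ (1/M₁) → |w t| ≤ 2 ∧ |w t - 1| ≤ M₁ * t := by
    intro t ht htδ
    simp only [lt_min_iff] at htδ
    obtain ⟨hb1, hM1t⟩ := htδ
    have hu1 : |u₁ t| ≤ M₁ := hMb₁ t (by rw [abs_of_pos ht]; exact hb1)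
    have h1 : |w t - 1| = t * |u₁ t| := by
      rw [hw t]
      have : (1:ℝ) + t * u₁ t - 1 = t * u₁ t := by ring
      rw [this, abs_mul, abs_of_pos ht]
    have h2 : |w t - 1| ≤ M₁ * t := by
      rw [h1]; nlinarith
    have htM : t * M₁ ≤ 1 := by
      have := (lt_div_iff₀ hM₁).mp hM1t
      linarith
    refine ⟨?_, h2⟩
    calc |w t| = |w t - 1 + 1| := by congr 1; ring
      _ ≤ |w t - 1| + 1 := by have := abs_add_le (w t - 1) 1; simpa using this
      _ ≤ M₁ * t + 1 := by linarith
      _ ≤ 2 := by nlinarith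
  have hXb : ∀ t : ℝ, 0 < t → t < min β₁ (1/M₁) → |t^2 * w t| ≤ 2*t^2 := by
    intro t ht htδ
    have := (hwb t ht htδ).1
    calc |t^2 * w t| = t^2 * |w t| := by rw [abs_mul, abs_of_nonneg (sq_nonneg t)]
      _ ≤ t^2 * 2 := mul_le_mul_of_nonneg_left this (sq_nonneg t)
      _ = 2*t^2 := by ring
  have hYb : ∀ t : ℝ, 0 < t → t < min β₂ 1 → |K1*t^(κ+3) + t^(κ+4) * u₂ t| ≤ Cy * t^(κ+3) := by
    intro t ht htδ
    simp only [lt_min_iff] at htδ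
    obtain ⟨hb2, h1t⟩ := htδ
    have hu2 : |u₂ t| ≤ M₂ := hMb₂ t (by rw [abs_of_pos ht]; exact hb2)
    have hple : t^(κ+4) ≤ t^(κ+3) := hpow_le t ht h1t.le (κ+3) (κ+4) (by omega)
    have h3 : (0:ℝ) ≤ t^(κ+3) := pow_nonneg ht.le _
    have h4 : (0:ℝ) ≤ t^(κ+4) := pow_nonneg ht.le _
    calc |K1*t^(κ+3) + t^(κ+4) * u₂ t| ≤ |K1*t^(κ+3)| + |t^(κ+4) * u₂ t| := abs_add_le _ _
      _ = |K1| * t^(κ+3) + t^(κ+4)*|u₂ t| := by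
          rw [abs_mul, abs_mul, abs_of_nonneg h3, abs_of_nonneg h4]
      _ ≤ |K1| * t^(κ+3) + t^(κ+3)*M₂ := by nlinarith
      _ = Cy * t^(κ+3) := by rw [hCydef]; ring
  set δy : ℝ := min εU (min ε₁ (min ε₂ (min ε₃ (min δs (ε₂/2))))) with hδydef
  have hδy : 0 < δy := by
    simp only [hδydef, lt_min_iff]
    exact ⟨hεU, hε₁, hε₂, hε₃, hδs, by positivity⟩
  have keyy : ∀ t : ℝ, 0 < t → t < δy →
      (a - ((κ:ℝ)+3)*K1*Rk) * t^(2*κ+4) =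
        ((F (Khat t)).2 - (Khat (Rhat t)).2)
        + (a * (t^2 * w t)^(κ+2) - p (t^2 * w t))
        + (a * t^(2*κ+4) - a * t^(2*κ+4) * (w t)^(κ+2))
        + (-((K1*t^(κ+3) + t^(κ+4) * u₂ t) * q (t^2 * w t)))
        + (-((K1*t^(κ+3) + t^(κ+4) * u₂ t)^2 * h (Khat t)))
        + K1*((κ:ℝ)+3)*t^(2*κ+5) * u₃ t
        + K1 * ((Rhat t)^(κ+3) - t^(κ+3) - ((κ:ℝ)+3)*t^(κ+2)*(Rhat t - t))
        + ((Rhat t)^(κ+4) - t^(κ+4)) * u₂ (Rhat t)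
        + t^(κ+4) * (u₂ (Rhat t) - u₂ t) := by
    intro t ht htδ
    simp only [hδydef, lt_min_iff] at htδ
    obtain ⟨hU', h1', h2', h3', hs', h22'⟩ := htδ
    have habs : |t| = t := abs_of_pos ht
    have hR2 : |Rhat t| ≤ 2*t := (hsb t ht hs').2
    have hRε₂ : |Rhat t| < ε₂ := by linarith
    have hmem : Khat t ∈ U := hmemU t (by rw [habs]; exact hU')
    have e5 : (F (Khat t)).2 = (Khat t).2 + f (Khat t) := by
      rw [hFform (Khat t) hmem]
    have e6 : f (Khat t) = p (Khat t).1 + (Khat t).2 * q (Khat t).1 + (Khat t).2^2 * h (Khat t) :=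
      hdecomp (Khat t) hmem
    have e4 : (Khat (Rhat t)).2 = K1 * (Rhat t)^(κ+3) + (Rhat t)^(κ+4) * u₂ (Rhat t) :=
      hev₂' (Rhat t) hRε₂
    have e1w : (Khat t).1 = t^2 * w t := by
      rw [hev₁' t (by rw [habs]; exact h1'), hw t]; ring
    have e2 := hev₂' t (by rw [habs]; exact h2')
    have e3 := hev₃' t (by rw [habs]; exact h3')
    rw [e5, e6, e4, e1w, e2]
    linear_combination (K1*((κ:ℝ)+3)*t^(κ+2)) * e3
  have T2 : SmallO (fun t => a * (t^2 * w t)^(κ+2) - p (t^2 * w t)) (2*κ+5) := by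
    refine smallO_of_bound (Cp * 2^(κ+3)) (min β₁ (min (1/M₁) (min 1 (δp/2))))
      (lt_min hβ₁ (lt_min (by positivity) (lt_min one_pos (by positivity)))) ?_
    intro t ht htδ
    simp only [lt_min_iff] at htδ
    obtain ⟨hb1, hM1t, h1t, hdp⟩ := htδ
    have hX := hXb t ht (lt_min hb1 hM1t)
    have hXδ : |t^2 * w t| < δp := by nlinarith
    have hbp' := hbp (t^2 * w t) hXδ
    have h1 : |a * (t^2*w t)^(κ+2) - p (t^2*w t)| = |p (t^2*w t) - a * (t^2*w t)^(κ+2)| :=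
      abs_sub_comm _ _
    have h2 : |t^2*w t|^(κ+3) ≤ (2*t^2)^(κ+3) := pow_le_pow_left₀ (abs_nonneg _) hX _
    have h3 : ((2:ℝ)*t^2)^(κ+3) = 2^(κ+3) * t^(2*κ+6) := by
      rw [mul_pow, ← pow_mul, show 2*(κ+3) = 2*κ+6 from by omega]
    have h4 : t^(2*κ+6) ≤ t^(2*κ+5) := hpow_le t ht h1t.le (2*κ+5) (2*κ+6) (by omega)
    calc |a * (t^2*w t)^(κ+2) - p (t^2*w t)| = |p (t^2*w t) - a * (t^2*w t)^(κ+2)| := h1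
      _ ≤ Cp * |t^2*w t|^(κ+3) := hbp'
      _ ≤ Cp * (2^(κ+3) * t^(2*κ+6)) := by
          rw [← h3]; exact mul_le_mul_of_nonneg_left h2 hCp.le
      _ = Cp * 2^(κ+3) * t^(2*κ+6) := by ring
      _ ≤ Cp * 2^(κ+3) * t^(2*κ+5) := mul_le_mul_of_nonneg_left h4 (by positivity)
  have T3 : SmallO (fun t => a * t^(2*κ+4) - a * t^(2*κ+4) * (w t)^(κ+2)) (2*κ+5) := by
    refine smallO_of_bound (|a| * (((κ:ℝ)+2) * 2^(κ+1) * M₁)) (min β₁ (1/M₁))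
      (lt_min hβ₁ (by positivity)) ?_
    intro t ht htδ
    obtain ⟨hw2, hw1⟩ := hwb t ht htδ
    have h1 : |(1:ℝ)| ≤ 2 := by norm_num
    have hps := abs_pow_sub_pow (w t) 1 2 hw2 h1 (κ+1)
    rw [one_pow] at hps
    have hcast : ((κ+1:ℕ):ℝ) + 1 = (κ:ℝ)+2 := by push_cast; ring
    rw [hcast] at hps
    rw [show κ+1+1 = κ+2 from rfl] at hps
    have h2 : |a * t^(2*κ+4) - a * t^(2*κ+4) * (w t)^(κ+2)|
        = |a| * t^(2*κ+4) * |(w t)^(κ+2) - 1| := by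
      have e : a * t^(2*κ+4) - a * t^(2*κ+4) * (w t)^(κ+2)
          = -(a * t^(2*κ+4) * ((w t)^(κ+2) - 1)) := by ring
      rw [e, abs_neg, abs_mul, abs_mul, abs_of_nonneg (pow_nonneg ht.le _)]
    rw [h2]
    have h3 : |(w t)^(κ+2) - 1| ≤ ((κ:ℝ)+2) * 2^(κ+1) * (M₁ * t) := by
      calc |(w t)^(κ+2) - 1| ≤ ((κ:ℝ)+2) * 2^(κ+1) * |w t - 1| := hps
        _ ≤ ((κ:ℝ)+2) * 2^(κ+1) * (M₁ * t) := by
            apply mul_le_mul_of_nonneg_left hw1 (by positivity)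
    calc |a| * t^(2*κ+4) * |(w t)^(κ+2) - 1|
        ≤ |a| * t^(2*κ+4) * (((κ:ℝ)+2) * 2^(κ+1) * (M₁ * t)) := by
          apply mul_le_mul_of_nonneg_left h3 (by positivity)
      _ = |a| * (((κ:ℝ)+2) * 2^(κ+1) * M₁) * (t^(2*κ+4) * t) := by ring
      _ = |a| * (((κ:ℝ)+2) * 2^(κ+1) * M₁) * t^(2*κ+5) := by
          rw [← pow_succ]
  have T4 : SmallO (fun t => -((K1*t^(κ+3) + t^(κ+4) * u₂ t) * q (t^2 * w t))) (2*κ+5) := by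
    refine smallO_of_bound (Cy*Cq*2^(ν+1)) (min β₁ (min (1/M₁) (min 1 (min (δq/2) β₂))))
      (lt_min hβ₁ (lt_min (by positivity) (lt_min one_pos (lt_min (by positivity) hβ₂)))) ?_
    intro t ht htδ
    simp only [lt_min_iff] at htδ
    obtain ⟨hb1, hM1t, h1t, hdq, hb2⟩ := htδ
    have hX := hXb t ht (lt_min hb1 hM1t)
    have hY := hYb t ht (lt_min hb2 h1t)
    have hXδ : |t^2 * w t| < δq := by nlinarith
    have hq' := hbq (t^2 * w t) hXδ
    have h2 : |t^2*w t|^(ν+1) ≤ (2*t^2)^(ν+1) := pow_le_pow_left₀ (abs_nonneg _) hX _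
    have h3 : ((2:ℝ)*t^2)^(ν+1) = 2^(ν+1) * t^(2*ν+2) := by
      rw [mul_pow, ← pow_mul, show 2*(ν+1) = 2*ν+2 from by omega]
    have hq2 : |q (t^2 * w t)| ≤ Cq * 2^(ν+1) * t^(2*ν+2) := by
      calc |q (t^2 * w t)| ≤ Cq * |t^2*w t|^(ν+1) := hq'
        _ ≤ Cq * (2^(ν+1) * t^(2*ν+2)) := by
            rw [← h3]; exact mul_le_mul_of_nonneg_left h2 hCq.le
        _ = Cq * 2^(ν+1) * t^(2*ν+2) := by ring
    have hcomb : |K1*t^(κ+3) + t^(κ+4) * u₂ t| * |q (t^2 * w t)|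
        ≤ (Cy * t^(κ+3)) * (Cq * 2^(ν+1) * t^(2*ν+2)) := by
      apply mul_le_mul hY hq2 (abs_nonneg _) (by positivity)
    have hpowe : t^(κ+3) * t^(2*ν+2) = t^(κ+2*ν+5) := by
      rw [← pow_add]
      congr 1
      omega
    have hple : t^(κ+2*ν+5) ≤ t^(2*κ+5) := hpow_le t ht h1t.le (2*κ+5) (κ+2*ν+5) (by omega)
    calc |(-((K1*t^(κ+3) + t^(κ+4) * u₂ t) * q (t^2 * w t)))|
        = |K1*t^(κ+3) + t^(κ+4) * u₂ t| * |q (t^2 * w t)| := by rw [abs_neg, abs_mul]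
      _ ≤ (Cy * t^(κ+3)) * (Cq * 2^(ν+1) * t^(2*ν+2)) := hcomb
      _ = Cy*Cq*2^(ν+1) * (t^(κ+3) * t^(2*ν+2)) := by ring
      _ = Cy*Cq*2^(ν+1) * t^(κ+2*ν+5) := by rw [hpowe]
      _ ≤ Cy*Cq*2^(ν+1) * t^(2*κ+5) := mul_le_mul_of_nonneg_left hple (by positivity)
  have T5 : SmallO (fun t => -((K1*t^(κ+3) + t^(κ+4) * u₂ t)^2 * h (Khat t))) (2*κ+5) := by
    refine smallO_of_bound (Cy^2*Mh) (min β₂ (min 1 εh))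
      (lt_min hβ₂ (lt_min one_pos hεh)) ?_
    intro t ht htδ
    simp only [lt_min_iff] at htδ
    obtain ⟨hb2, h1t, heh⟩ := htδ
    have hY := hYb t ht (lt_min hb2 h1t)
    have hh : |h (Khat t)| ≤ Mh := hMbh t (by rw [abs_of_pos ht]; exact heh)
    have hY2 : |K1*t^(κ+3) + t^(κ+4) * u₂ t|^2 ≤ (Cy * t^(κ+3))^2 :=
      pow_le_pow_left₀ (abs_nonneg _) hY 2
    have hpowe : (Cy * t^(κ+3))^2 = Cy^2 * t^(2*κ+6) := by
      rw [mul_pow, ← pow_mul]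
      congr 2
      omega
    have hple : t^(2*κ+6) ≤ t^(2*κ+5) := hpow_le t ht h1t.le (2*κ+5) (2*κ+6) (by omega)
    calc |(-((K1*t^(κ+3) + t^(κ+4) * u₂ t)^2 * h (Khat t)))|
        = |K1*t^(κ+3) + t^(κ+4) * u₂ t|^2 * |h (Khat t)| := by
          rw [abs_neg, abs_mul, abs_pow]
      _ ≤ (Cy^2 * t^(2*κ+6)) * Mh := by
          rw [← hpowe]
          apply mul_le_mul hY2 hh (abs_nonneg _) (by positivity)
      _ = Cy^2*Mh * t^(2*κ+6) := by ring
      _ ≤ Cy^2*Mh * t^(2*κ+5) := mul_le_mul_of_nonneg_left hple (by positivity)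
  have T6 : SmallO (fun t => K1*((κ:ℝ)+3)*t^(2*κ+5) * u₃ t) (2*κ+5) := by
    refine smallO_of_bound (|K1| * ((κ:ℝ)+3)*M₃) β₃ hβ₃ ?_
    intro t ht htδ
    have hu3 : |u₃ t| ≤ M₃ := hMb₃ t (by rw [abs_of_pos ht]; exact htδ)
    have htp : (0:ℝ) ≤ t^(2*κ+5) := pow_nonneg ht.le _
    calc |K1*((κ:ℝ)+3)*t^(2*κ+5) * u₃ t| = |K1| * ((κ:ℝ)+3)*t^(2*κ+5) * |u₃ t| := by
          rw [abs_mul, abs_mul, abs_mul, abs_of_nonneg htp,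
            abs_of_nonneg (by positivity : (0:ℝ) ≤ (κ:ℝ)+3)]
      _ ≤ |K1| * ((κ:ℝ)+3)*t^(2*κ+5) * M₃ := by
          apply mul_le_mul_of_nonneg_left hu3 (by positivity)
      _ = |K1| * ((κ:ℝ)+3)*M₃ * t^(2*κ+5) := by ring
  have T7 : SmallO (fun t => K1 * ((Rhat t)^(κ+3) - t^(κ+3) - ((κ:ℝ)+3)*t^(κ+2)*(Rhat t - t))) (2*κ+5) := by
    refine smallO_of_bound (|K1| * ((κ:ℝ)+3)^2*2^(κ+1)*Cs^2) (min δs 1)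
      (lt_min hδs one_pos) ?_
    intro t ht htδ
    simp only [lt_min_iff] at htδ
    obtain ⟨hs', h1t⟩ := htδ
    obtain ⟨hsb1, hsb2⟩ := hsb t ht hs'
    have ht2 : |t| ≤ 2*t := by rw [abs_of_pos ht]; linarith
    have htay := taylor2 (Rhat t) t (2*t) hsb2 ht2 (κ+1)
    have hcast : ((κ+1:ℕ):ℝ) + 2 = (κ:ℝ)+3 := by push_cast; ring
    rw [hcast] at htay
    have he1 : κ+1+2 = κ+3 := rfl
    have he2 : κ+1+1 = κ+2 := rfl
    rw [he1, he2] at htay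
    have hsq : (Rhat t - t)^2 ≤ (Cs * t^(κ+2))^2 := by
      have := sq_abs (Rhat t - t)
      nlinarith [abs_nonneg (Rhat t - t)]
    have h2t : ((2:ℝ)*t)^(κ+1) = 2^(κ+1)*t^(κ+1) := mul_pow 2 t (κ+1)
    have hbound : ((κ:ℝ)+3)^2 * (2*t)^(κ+1) * (Rhat t - t)^2
        ≤ ((κ:ℝ)+3)^2 * 2^(κ+1) * Cs^2 * t^(3*κ+5) := by
      have hcs2 : (Cs * t^(κ+2))^2 = Cs^2 * t^(2*κ+4) := by
        rw [mul_pow, ← pow_mul]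
        congr 2
        omega
      have hmul : t^(κ+1) * t^(2*κ+4) = t^(3*κ+5) := by
        rw [← pow_add]
        congr 1
        omega
      have step : (2*t)^(κ+1) * (Rhat t - t)^2 ≤ 2^(κ+1)*t^(κ+1) * (Cs^2 * t^(2*κ+4)) := by
        rw [h2t, ← hcs2]
        apply mul_le_mul_of_nonneg_left hsq (by positivity)
      calc ((κ:ℝ)+3)^2 * (2*t)^(κ+1) * (Rhat t - t)^2
          = ((κ:ℝ)+3)^2 * ((2*t)^(κ+1) * (Rhat t - t)^2) := by ring
        _ ≤ ((κ:ℝ)+3)^2 * (2^(κ+1)*t^(κ+1) * (Cs^2 * t^(2*κ+4))) := by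
            apply mul_le_mul_of_nonneg_left step (by positivity)
        _ = ((κ:ℝ)+3)^2 * 2^(κ+1) * Cs^2 * (t^(κ+1) * t^(2*κ+4)) := by ring
        _ = ((κ:ℝ)+3)^2 * 2^(κ+1) * Cs^2 * t^(3*κ+5) := by rw [hmul]
    have hple : t^(3*κ+5) ≤ t^(2*κ+5) := hpow_le t ht h1t.le (2*κ+5) (3*κ+5) (by omega)
    calc |K1 * ((Rhat t)^(κ+3) - t^(κ+3) - ((κ:ℝ)+3)*t^(κ+2)*(Rhat t - t))|
        = |K1| * |(Rhat t)^(κ+3) - t^(κ+3) - ((κ:ℝ)+3)*t^(κ+2)*(Rhat t - t)| := abs_mul _ _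
      _ ≤ |K1| * (((κ:ℝ)+3)^2 * (2*t)^(κ+1) * (Rhat t - t)^2) := by
          apply mul_le_mul_of_nonneg_left htay (abs_nonneg _)
      _ ≤ |K1| * (((κ:ℝ)+3)^2 * 2^(κ+1) * Cs^2 * t^(3*κ+5)) := by
          apply mul_le_mul_of_nonneg_left (le_trans hbound (le_refl _)) (abs_nonneg _)
      _ ≤ |K1| * (((κ:ℝ)+3)^2 * 2^(κ+1) * Cs^2 * t^(2*κ+5)) := by
          apply mul_le_mul_of_nonneg_left _ (abs_nonneg _)
          apply mul_le_mul_of_nonneg_left hple (by positivity)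
      _ = |K1| * ((κ:ℝ)+3)^2*2^(κ+1)*Cs^2 * t^(2*κ+5) := by ring
  have T8 : SmallO (fun t => ((Rhat t)^(κ+4) - t^(κ+4)) * u₂ (Rhat t)) (2*κ+5) := by
    refine smallO_of_bound (((κ:ℝ)+4)*2^(κ+3)*Cs*M₂) (min δs (β₂/2))
      (lt_min hδs (by positivity)) ?_
    intro t ht htδ
    simp only [lt_min_iff] at htδ
    obtain ⟨hs', hb2⟩ := htδ
    obtain ⟨hsb1, hsb2⟩ := hsb t ht hs'
    have hu2 : |u₂ (Rhat t)| ≤ M₂ := hMb₂ (Rhat t) (by linarith)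
    have ht2 : |t| ≤ 2*t := by rw [abs_of_pos ht]; linarith
    have hps := abs_pow_sub_pow (Rhat t) t (2*t) hsb2 ht2 (κ+3)
    have hcast : ((κ+3:ℕ):ℝ) + 1 = (κ:ℝ)+4 := by push_cast; ring
    rw [hcast] at hps
    have he1 : κ+3+1 = κ+4 := rfl
    rw [he1] at hps
    have h2t : ((2:ℝ)*t)^(κ+3) = 2^(κ+3)*t^(κ+3) := mul_pow 2 t (κ+3)
    have hmul : t^(κ+3) * t^(κ+2) = t^(2*κ+5) := by
      rw [← pow_add]
      congr 1
      omega
    have hbound : ((κ:ℝ)+4) * (2*t)^(κ+3) * |Rhat t - t| ≤ ((κ:ℝ)+4)*2^(κ+3)*Cs * t^(2*κ+5) := by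
      calc ((κ:ℝ)+4) * (2*t)^(κ+3) * |Rhat t - t|
          ≤ ((κ:ℝ)+4) * (2*t)^(κ+3) * (Cs * t^(κ+2)) := by
            apply mul_le_mul_of_nonneg_left hsb1 (by positivity)
        _ = ((κ:ℝ)+4)*2^(κ+3)*Cs * (t^(κ+3) * t^(κ+2)) := by rw [h2t]; ring
        _ = ((κ:ℝ)+4)*2^(κ+3)*Cs * t^(2*κ+5) := by rw [hmul]
    calc |((Rhat t)^(κ+4) - t^(κ+4)) * u₂ (Rhat t)|
        = |(Rhat t)^(κ+4) - t^(κ+4)| * |u₂ (Rhat t)| := abs_mul _ _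
      _ ≤ (((κ:ℝ)+4) * (2*t)^(κ+3) * |Rhat t - t|) * M₂ := by
          apply mul_le_mul hps hu2 (abs_nonneg _) (by positivity)
      _ ≤ (((κ:ℝ)+4)*2^(κ+3)*Cs * t^(2*κ+5)) * M₂ := mul_le_mul_of_nonneg_right hbound hM₂.le
      _ = ((κ:ℝ)+4)*2^(κ+3)*Cs*M₂ * t^(2*κ+5) := by ring
  have T9 : SmallO (fun t => t^(κ+4) * (u₂ (Rhat t) - u₂ t)) (2*κ+5) := by
    refine smallO_of_bound (L₂*Cs) (min δs (min (γ₂/2) 1))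
      (lt_min hδs (lt_min (by positivity) one_pos)) ?_
    intro t ht htδ
    simp only [lt_min_iff] at htδ
    obtain ⟨hs', hg2, h1t⟩ := htδ
    obtain ⟨hsb1, hsb2⟩ := hsb t ht hs'
    have hlip := hLb₂ (Rhat t) t (by linarith) (by rw [abs_of_pos ht]; linarith)
    have htp : (0:ℝ) ≤ t^(κ+4) := pow_nonneg ht.le _
    have hmul : t^(κ+4) * t^(κ+2) = t^(2*κ+6) := by
      rw [← pow_add]
      congr 1
      omega
    have hple : t^(2*κ+6) ≤ t^(2*κ+5) := hpow_le t ht h1t.le (2*κ+5) (2*κ+6) (by omega)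
    calc |t^(κ+4) * (u₂ (Rhat t) - u₂ t)| = t^(κ+4) * |u₂ (Rhat t) - u₂ t| := by
          rw [abs_mul, abs_of_nonneg htp]
      _ ≤ t^(κ+4) * (L₂ * |Rhat t - t|) := mul_le_mul_of_nonneg_left hlip htp
      _ ≤ t^(κ+4) * (L₂ * (Cs * t^(κ+2))) := by
          apply mul_le_mul_of_nonneg_left _ htp
          exact mul_le_mul_of_nonneg_left hsb1 hL₂
      _ = L₂*Cs * (t^(κ+4) * t^(κ+2)) := by ring
      _ = L₂*Cs * t^(2*κ+6) := by rw [hmul]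
      _ ≤ L₂*Cs * t^(2*κ+5) := mul_le_mul_of_nonneg_left hple (by positivity)
  have Sy : SmallO (fun t => (a - ((κ:ℝ)+3)*K1*Rk) * t^(2*κ+4)) (2*κ+5) :=
    smallO_congr δy hδy keyy
      ((((((((herry.add T2).add T3).add T4).add T5).add T6).add T7).add T8).add T9)
  have hyeq : a - ((κ:ℝ)+3)*K1*Rk = 0 := coeff_eq_zero Sy
  -- ===== conclusion =====
  have hcK : c * K1 = 2 * Rk := by linarith
  have hRkeq : Rk = c/2 * K1 := by linarith
  have haeq : a = ((κ:ℝ)+3) * K1 * Rk := by linarith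
  refine ⟨hcK, ?_, ?_, hRkeq⟩
  · push_cast
    linear_combination haeq
  · push_cast
    rw [eq_div_iff (by positivity : c*((κ:ℝ)+2+1) ≠ 0)]
    linear_combination (-2)*hyeq + (((κ:ℝ)+3)*K1)*hxeq
end
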